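/- arXiv:1603.05033 — 5 statements merged into one kernel-verified Lean document; each statement's English description precedes it below -/
import Mathlib

section
/- Let a < b be real numbers, p ∈ [1,∞) and u ∈ L^p(a,b). Then ‖I_{a+}^s[u] − u‖_{L^p(a,b)} → 0 as s → 0+. -/
open MeasureTheory Set Filter ENNReal

/-- The left Riemann–Liouville fractional integral of order `σ` with base point `a`. -/
noncomputable def RLint (a σ : ℝ) (u : ℝ → ℝ) (x : ℝ) : ℝ :=
  (Real.Gamma σ)⁻¹ * ∫ t in a..x, u t * (x - t) ^ (σ - 1)

namespace RLaux

lemma ker_intble {s : ℝ} (hs : 0 < s) (c d x : ℝ) :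
    IntervalIntegrable (fun t => (x - t) ^ (s - 1)) volume c d := by
  have h := (intervalIntegral.intervalIntegrable_rpow' (a := x - c) (b := x - d) (r := s - 1)
    (by linarith)).comp_sub_left x
  simpa using h

lemma ker_integral {s : ℝ} (hs : 0 < s) {c d x : ℝ} (hdx : d ≤ x) :
    ∫ t in c..d, (x - t) ^ (s - 1) = ((x - c) ^ s - (x - d) ^ s) / s := by
  rw [intervalIntegral.integral_comp_sub_left (fun y => y ^ (s - 1)) x,
    integral_rpow (Or.inl (by linarith))]
  norm_num

lemma ker_integral0 {s : ℝ} (hs : 0 < s) {c x : ℝ} (hcx : c ≤ x) :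
    ∫ t in c..x, (x - t) ^ (s - 1) = (x - c) ^ s / s := by
  rw [ker_integral hs le_rfl, sub_self, Real.zero_rpow (ne_of_gt hs), sub_zero]

lemma ker_lintegral_left {s : ℝ} (hs : 0 < s) {c x : ℝ} (hcx : c ≤ x) :
    ∫⁻ t in Ioo c x, ENNReal.ofReal ((x - t) ^ (s - 1)) = ENNReal.ofReal ((x - c) ^ s / s) := by
  rw [Measure.restrict_congr_set Ioo_ae_eq_Ioc, ← ofReal_integral_eq_lintegral_ofReal]
  · rw [← intervalIntegral.integral_of_le hcx, ker_integral0 hs hcx]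
  · exact (intervalIntegrable_iff_integrableOn_Ioc_of_le hcx).1 (ker_intble hs c x x)
  · exact ae_restrict_of_forall_mem measurableSet_Ioc fun t ht =>
      Real.rpow_nonneg (by linarith [ht.2]) _

lemma ker_lintegral_right {s : ℝ} (hs : 0 < s) {t b : ℝ} (htb : t ≤ b) :
    ∫⁻ x in Ioo t b, ENNReal.ofReal ((x - t) ^ (s - 1)) = ENNReal.ofReal ((b - t) ^ s / s) := by
  rw [Measure.restrict_congr_set Ioo_ae_eq_Ioc, ← ofReal_integral_eq_lintegral_ofReal]
  · rw [← intervalIntegral.integral_of_le htb,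
      intervalIntegral.integral_comp_sub_right (fun y => y ^ (s - 1)) t, sub_self,
      integral_rpow (Or.inl (by linarith))]
    norm_num [Real.zero_rpow (ne_of_gt hs)]
  · have h := (intervalIntegral.intervalIntegrable_rpow' (a := (0:ℝ)) (b := b - t) (r := s - 1)
      (by linarith)).comp_sub_right t
    simp only [zero_add, sub_add_cancel] at h
    exact (intervalIntegrable_iff_integrableOn_Ioc_of_le htb).1 h
  · exact ae_restrict_of_forall_mem measurableSet_Ioc fun x hx =>
      Real.rpow_nonneg (by linarith [hx.1]) _

noncomputable def Fker (a s : ℝ) (W : ℝ → ℝ≥0∞) : ℝ × ℝ → ℝ≥0∞ :=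
  ({q : ℝ × ℝ | a < q.2 ∧ q.2 < q.1}).indicator
    fun q => ENNReal.ofReal ((q.1 - q.2) ^ (s - 1)) * W q.2

lemma Fker_apply (a s : ℝ) (W : ℝ → ℝ≥0∞) (x t : ℝ) :
    Fker a s W (x, t) = if a < t ∧ t < x then ENNReal.ofReal ((x - t) ^ (s - 1)) * W t else 0 := by
  simp [Fker, Set.indicator_apply]

lemma Fker_meas (a s : ℝ) {W : ℝ → ℝ≥0∞} (hW : Measurable W) : Measurable (Fker a s W) := by
  apply Measurable.indicator
  · exact Measurable.mul (by fun_prop) (hW.comp measurable_snd)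
  · exact (measurableSet_lt measurable_const measurable_snd).inter
      (measurableSet_lt measurable_snd measurable_fst)

lemma Fker_eq_inner (a s : ℝ) (W : ℝ → ℝ≥0∞) (x : ℝ) :
    (∫⁻ t in Ioo a x, ENNReal.ofReal ((x - t) ^ (s - 1)) * W t) = ∫⁻ t, Fker a s W (x, t) := by
  rw [← lintegral_indicator measurableSet_Ioo]
  apply lintegral_congr
  intro t
  rw [Fker_apply, Set.indicator_apply]
  simp [Set.mem_Ioo]

lemma swap_bound {a b s : ℝ} (hs : 0 < s) {W : ℝ → ℝ≥0∞} (hW : Measurable W) :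
    (∫⁻ x in Ioo a b, ∫⁻ t in Ioo a x, ENNReal.ofReal ((x - t) ^ (s - 1)) * W t) ≤
      ENNReal.ofReal ((b - a) ^ s / s) * ∫⁻ t in Ioo a b, W t := by
  set C := ENNReal.ofReal ((b - a) ^ s / s) with hCdef
  calc
    (∫⁻ x in Ioo a b, ∫⁻ t in Ioo a x, ENNReal.ofReal ((x - t) ^ (s - 1)) * W t)
        = ∫⁻ x in Ioo a b, ∫⁻ t, Fker a s W (x, t) :=
          lintegral_congr fun x => Fker_eq_inner a s W x
    _ = ∫⁻ t, ∫⁻ x in Ioo a b, Fker a s W (x, t) :=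
          lintegral_lintegral_swap (Fker_meas a s hW).aemeasurable
    _ ≤ ∫⁻ t, (Ioo a b).indicator (fun t => C * W t) t := by
          apply lintegral_mono
          intro t
          by_cases ht : t ∈ Ioo a b
          · have hset : Ioi t ∩ Ioo a b = Ioo t b := by
              ext x
              simp only [Set.mem_inter_iff, Set.mem_Ioi, Set.mem_Ioo]
              exact ⟨fun h => ⟨h.1, h.2.2⟩, fun h => ⟨h.1, lt_trans ht.1 h.1, h.2⟩⟩
            calc
              (∫⁻ x in Ioo a b, Fker a s W (x, t))
                  = ∫⁻ x in Ioo a b, (Ioi t).indicator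
                      (fun x => ENNReal.ofReal ((x - t) ^ (s - 1)) * W t) x := by
                    apply lintegral_congr
                    intro x
                    rw [Fker_apply, Set.indicator_apply]
                    simp [Set.mem_Ioi, ht.1]
              _ = ∫⁻ x in Ioi t ∩ Ioo a b, ENNReal.ofReal ((x - t) ^ (s - 1)) * W t := by
                    rw [lintegral_indicator measurableSet_Ioi,
                      Measure.restrict_restrict measurableSet_Ioi]
              _ = (∫⁻ x in Ioo t b, ENNReal.ofReal ((x - t) ^ (s - 1))) * W t := by
                    rw [hset, lintegral_mul_const'' _ (by fun_prop)]
              _ ≤ C * W t := by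
                    apply mul_le_mul_left
                    rw [ker_lintegral_right hs ht.2.le, hCdef]
                    apply ENNReal.ofReal_le_ofReal
                    apply (div_le_div_iff_of_pos_right hs).2
                    exact Real.rpow_le_rpow (by linarith [ht.2]) (by linarith [ht.1]) hs.le
              _ = (Ioo a b).indicator (fun t => C * W t) t := by
                    rw [Set.indicator_of_mem ht]
          · calc
              (∫⁻ x in Ioo a b, Fker a s W (x, t)) = ∫⁻ _x in Ioo a b, (0:ℝ≥0∞) := by
                    apply setLIntegral_congr_fun_ae measurableSet_Ioo
                    apply ae_of_all
                    intro x hx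
                    rw [Fker_apply, if_neg]
                    rintro ⟨h1, h2⟩
                    exact ht ⟨h1, lt_trans h2 hx.2⟩
              _ = 0 := lintegral_zero
              _ ≤ (Ioo a b).indicator (fun t => C * W t) t := zero_le
    _ = ∫⁻ t in Ioo a b, C * W t := lintegral_indicator measurableSet_Ioo _
    _ = C * ∫⁻ t in Ioo a b, W t := lintegral_const_mul' _ _ (by simp [hCdef])

lemma holder_step {α : Type*} [MeasurableSpace α] (μ : Measure α) {P : ℝ} (hP : 1 ≤ P)
    {κ f : α → ℝ≥0∞} (hκ : Measurable κ) (hf : Measurable f) :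
    (∫⁻ y, κ y * f y ∂μ) ^ P ≤ (∫⁻ y, κ y ∂μ) ^ (P - 1) * ∫⁻ y, κ y * f y ^ P ∂μ := by
  rcases eq_or_lt_of_le hP with h1 | h1
  · simp [← h1]
  · have hP0 : (0:ℝ) < P := lt_trans zero_lt_one h1
    set Q := Real.conjExponent P with hQdef
    have hpq : P.HolderConjugate Q := Real.HolderConjugate.conjExponent h1
    have hQ0 : (0:ℝ) < Q := hpq.symm.pos
    have hsum : 1 / P + 1 / Q = 1 := by
      rw [one_div, one_div]; exact hpq.inv_add_inv_eq_one
    have key : (∫⁻ y, κ y * f y ∂μ) ≤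
        (∫⁻ y, κ y * f y ^ P ∂μ) ^ (1 / P) * (∫⁻ y, κ y ∂μ) ^ (1 / Q) := by
      have h := ENNReal.lintegral_mul_le_Lp_mul_Lq μ hpq
        (f := fun y => κ y ^ (1 / P) * f y) (g := fun y => κ y ^ (1 / Q))
        (by fun_prop) (by fun_prop)
      have e1 : ∀ y, ((fun y => κ y ^ (1 / P) * f y) * fun y => κ y ^ (1 / Q)) y = κ y * f y := by
        intro y
        simp only [Pi.mul_apply]
        rw [mul_right_comm, ← ENNReal.rpow_add_of_nonneg _ _ (by positivity) (by positivity),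
          hsum, ENNReal.rpow_one]
      have e2 : ∀ y, (κ y ^ (1 / P) * f y) ^ P = κ y * f y ^ P := by
        intro y
        rw [ENNReal.mul_rpow_of_nonneg _ _ hP0.le, ← ENNReal.rpow_mul,
          one_div_mul_cancel hP0.ne', ENNReal.rpow_one]
      have e3 : ∀ y, (κ y ^ (1 / Q)) ^ Q = κ y := by
        intro y
        rw [← ENNReal.rpow_mul, one_div_mul_cancel hQ0.ne', ENNReal.rpow_one]
      simp only [e1, e2, e3] at h
      exact h
    have hPQ : (1 / Q) * P = P - 1 := by
      rw [hQdef, Real.conjExponent]; have : P - 1 ≠ 0 := (by linarith); field_simp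
    calc (∫⁻ y, κ y * f y ∂μ) ^ P
        ≤ ((∫⁻ y, κ y * f y ^ P ∂μ) ^ (1 / P) * (∫⁻ y, κ y ∂μ) ^ (1 / Q)) ^ P :=
          ENNReal.rpow_le_rpow key hP0.le
      _ = (∫⁻ y, κ y ∂μ) ^ (P - 1) * ∫⁻ y, κ y * f y ^ P ∂μ := by
          rw [ENNReal.mul_rpow_of_nonneg _ _ hP0.le, ← ENNReal.rpow_mul, ← ENNReal.rpow_mul,
            one_div_mul_cancel hP0.ne', ENNReal.rpow_one, hPQ, mul_comm]

lemma RL_enorm_le {a s : ℝ} (hs : 0 < s) (v : ℝ → ℝ) {x : ℝ} (hax : a ≤ x) :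
    (‖RLint a s v x‖₊ : ℝ≥0∞) ≤ ENNReal.ofReal (Real.Gamma s)⁻¹ *
      ∫⁻ t in Ioo a x, ENNReal.ofReal ((x - t) ^ (s - 1)) * (‖v t‖₊ : ℝ≥0∞) := by
  have hΓ : 0 < Real.Gamma s := Real.Gamma_pos_of_pos hs
  rw [RLint, nnnorm_mul, ENNReal.coe_mul, ← enorm_eq_nnnorm (Real.Gamma s)⁻¹,
    Real.enorm_eq_ofReal (inv_nonneg.2 hΓ.le)]
  apply mul_le_mul_right
  rw [intervalIntegral.integral_of_le hax]
  calc (‖∫ t in Ioc a x, v t * (x - t) ^ (s - 1)‖₊ : ℝ≥0∞)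
      ≤ ∫⁻ t in Ioc a x, ‖v t * (x - t) ^ (s - 1)‖₊ :=
        enorm_integral_le_lintegral_enorm _
    _ = ∫⁻ t in Ioo a x, ‖v t * (x - t) ^ (s - 1)‖₊ := by
        rw [Measure.restrict_congr_set Ioo_ae_eq_Ioc]
    _ = ∫⁻ t in Ioo a x, ENNReal.ofReal ((x - t) ^ (s - 1)) * (‖v t‖₊ : ℝ≥0∞) := by
        apply setLIntegral_congr_fun_ae measurableSet_Ioo
        apply ae_of_all
        intro t ht
        rw [nnnorm_mul, ENNReal.coe_mul, mul_comm, ← enorm_eq_nnnorm ((x - t) ^ (s - 1)),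
          Real.enorm_eq_ofReal (Real.rpow_nonneg (by linarith [ht.2]) _)]

lemma schur {a b : ℝ} {s : ℝ} (hs : 0 < s) {p : ℝ≥0∞} (hp : 1 ≤ p) (hp' : p ≠ ⊤)
    {v : ℝ → ℝ} (hv : Measurable v) :
    eLpNorm (fun x => RLint a s v x) p (volume.restrict (Ioo a b)) ≤
      ENNReal.ofReal ((b - a) ^ s / (s * Real.Gamma s)) * eLpNorm v p (volume.restrict (Ioo a b)) := by
  have hΓ : 0 < Real.Gamma s := Real.Gamma_pos_of_pos hs
  have hp0 : p ≠ 0 := (lt_of_lt_of_le zero_lt_one hp).ne'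
  set P := p.toReal with hPdef
  have hP1 : 1 ≤ P := by
    rw [hPdef, ← ENNReal.toReal_one]
    exact ENNReal.toReal_mono hp' hp
  have hP0 : (0:ℝ) < P := lt_of_lt_of_le zero_lt_one hP1
  set γ := ENNReal.ofReal (Real.Gamma s)⁻¹ with hγdef
  set C := ENNReal.ofReal ((b - a) ^ s / s) with hCdef
  have hre : (Real.Gamma s)⁻¹ * ((b - a) ^ s / s) = (b - a) ^ s / (s * Real.Gamma s) := by
    rw [inv_mul_eq_div, div_div]
  have hγC : γ * C = ENNReal.ofReal ((b - a) ^ s / (s * Real.Gamma s)) := by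
    rw [hγdef, hCdef, ← ENNReal.ofReal_mul (inv_nonneg.2 hΓ.le), hre]
  have hWm : Measurable fun t => ((‖v t‖₊ : ℝ≥0∞) ^ P) := by fun_prop
  have main : (∫⁻ x in Ioo a b, (‖RLint a s v x‖₊ : ℝ≥0∞) ^ P) ≤
      (γ * C) ^ P * ∫⁻ t in Ioo a b, (‖v t‖₊ : ℝ≥0∞) ^ P := by
    have step1 : (∫⁻ x in Ioo a b, (‖RLint a s v x‖₊ : ℝ≥0∞) ^ P) ≤
        ∫⁻ x in Ioo a b, γ ^ P * C ^ (P - 1) *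
          ∫⁻ t in Ioo a x, ENNReal.ofReal ((x - t) ^ (s - 1)) * (‖v t‖₊ : ℝ≥0∞) ^ P := by
      apply lintegral_mono_ae
      filter_upwards [self_mem_ae_restrict measurableSet_Ioo] with x hx
      have h1 : (‖RLint a s v x‖₊ : ℝ≥0∞) ^ P ≤
          (γ * ∫⁻ t in Ioo a x, ENNReal.ofReal ((x - t) ^ (s - 1)) * (‖v t‖₊ : ℝ≥0∞)) ^ P :=
        ENNReal.rpow_le_rpow (RL_enorm_le hs v hx.1.le) hP0.le
      have h2 : (∫⁻ t in Ioo a x, ENNReal.ofReal ((x - t) ^ (s - 1)) * (‖v t‖₊ : ℝ≥0∞)) ^ P ≤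
          C ^ (P - 1) * ∫⁻ t in Ioo a x, ENNReal.ofReal ((x - t) ^ (s - 1)) * (‖v t‖₊ : ℝ≥0∞) ^ P := by
        refine le_trans (holder_step _ hP1 (by fun_prop) (by fun_prop)) ?_
        apply mul_le_mul_left
        apply ENNReal.rpow_le_rpow ?_ (by linarith)
        rw [ker_lintegral_left hs hx.1.le, hCdef]
        apply ENNReal.ofReal_le_ofReal
        apply (div_le_div_iff_of_pos_right hs).2
        exact Real.rpow_le_rpow (by linarith [hx.1]) (by linarith [hx.2]) hs.le
      calc (‖RLint a s v x‖₊ : ℝ≥0∞) ^ P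
          ≤ (γ * ∫⁻ t in Ioo a x, ENNReal.ofReal ((x - t) ^ (s - 1)) * (‖v t‖₊ : ℝ≥0∞)) ^ P := h1
        _ = γ ^ P * (∫⁻ t in Ioo a x, ENNReal.ofReal ((x - t) ^ (s - 1)) * (‖v t‖₊ : ℝ≥0∞)) ^ P := by
            rw [ENNReal.mul_rpow_of_nonneg _ _ hP0.le]
        _ ≤ γ ^ P * (C ^ (P - 1) *
              ∫⁻ t in Ioo a x, ENNReal.ofReal ((x - t) ^ (s - 1)) * (‖v t‖₊ : ℝ≥0∞) ^ P) :=
            mul_le_mul_right h2 _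
        _ = γ ^ P * C ^ (P - 1) *
              ∫⁻ t in Ioo a x, ENNReal.ofReal ((x - t) ^ (s - 1)) * (‖v t‖₊ : ℝ≥0∞) ^ P := by
            rw [mul_assoc]
    have hfin : γ ^ P * C ^ (P - 1) ≠ ⊤ := by
      apply ENNReal.mul_ne_top <;>
        exact ENNReal.rpow_ne_top_of_nonneg (by linarith) ENNReal.ofReal_ne_top
    calc (∫⁻ x in Ioo a b, (‖RLint a s v x‖₊ : ℝ≥0∞) ^ P)
        ≤ ∫⁻ x in Ioo a b, γ ^ P * C ^ (P - 1) *
            ∫⁻ t in Ioo a x, ENNReal.ofReal ((x - t) ^ (s - 1)) * (‖v t‖₊ : ℝ≥0∞) ^ P := step1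
      _ = γ ^ P * C ^ (P - 1) * ∫⁻ x in Ioo a b,
            ∫⁻ t in Ioo a x, ENNReal.ofReal ((x - t) ^ (s - 1)) * (‖v t‖₊ : ℝ≥0∞) ^ P :=
          lintegral_const_mul' _ _ hfin
      _ ≤ γ ^ P * C ^ (P - 1) * (C * ∫⁻ t in Ioo a b, (‖v t‖₊ : ℝ≥0∞) ^ P) :=
          mul_le_mul_right (swap_bound hs hWm) _
      _ = (γ * C) ^ P * ∫⁻ t in Ioo a b, (‖v t‖₊ : ℝ≥0∞) ^ P := by
          have hCP : C ^ (P - 1) * C = C ^ P := by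
            nth_rewrite 2 [← ENNReal.rpow_one C]
            rw [← ENNReal.rpow_add_of_nonneg _ _ (by linarith) zero_le_one]
            norm_num
          rw [ENNReal.mul_rpow_of_nonneg _ _ hP0.le, ← hCP]
          ring
  rw [eLpNorm_eq_lintegral_rpow_enorm_toReal hp0 hp', eLpNorm_eq_lintegral_rpow_enorm_toReal hp0 hp', ← hγC,
    ← hPdef]
  calc (∫⁻ x in Ioo a b, (‖RLint a s v x‖₊ : ℝ≥0∞) ^ P) ^ (1 / P)
      ≤ ((γ * C) ^ P * ∫⁻ t in Ioo a b, (‖v t‖₊ : ℝ≥0∞) ^ P) ^ (1 / P) :=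
        ENNReal.rpow_le_rpow main (by positivity)
    _ = γ * C * (∫⁻ t in Ioo a b, (‖v t‖₊ : ℝ≥0∞) ^ P) ^ (1 / P) := by
        rw [ENNReal.mul_rpow_of_nonneg _ _ (by positivity), ← ENNReal.rpow_mul,
          mul_one_div_cancel hP0.ne', ENNReal.rpow_one]

/-! ### Measurable representative -/

noncomputable def RLm (a s : ℝ) (v : ℝ → ℝ) (x : ℝ) : ℝ :=
  (Real.Gamma s)⁻¹ * ∫ t, (Ioc a x).indicator (fun t => v t * (x - t) ^ (s - 1)) t

lemma RLm_eq (a s : ℝ) (v : ℝ → ℝ) {x : ℝ} (hax : a ≤ x) : RLm a s v x = RLint a s v x := by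
  rw [RLm, RLint, intervalIntegral.integral_of_le hax, integral_indicator measurableSet_Ioc]

lemma RLm_meas (a s : ℝ) {v : ℝ → ℝ} (hv : Measurable v) : StronglyMeasurable (RLm a s v) := by
  apply StronglyMeasurable.const_mul
  have hS : MeasurableSet {q : ℝ × ℝ | a < q.2 ∧ q.2 ≤ q.1} :=
    (measurableSet_lt measurable_const measurable_snd).inter
      (measurableSet_le measurable_snd measurable_fst)
  have hmeas : StronglyMeasurable fun q : ℝ × ℝ =>
      ({q : ℝ × ℝ | a < q.2 ∧ q.2 ≤ q.1}).indicator
        (fun q => v q.2 * (q.1 - q.2) ^ (s - 1)) q :=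
    (Measurable.indicator (by fun_prop) hS).stronglyMeasurable
  have h := hmeas.integral_prod_right' (ν := volume)
  have hfun : (fun x => ∫ t, (Ioc a x).indicator (fun t => v t * (x - t) ^ (s - 1)) t) =
      fun x => ∫ t, ({q : ℝ × ℝ | a < q.2 ∧ q.2 ≤ q.1}).indicator
        (fun q => v q.2 * (q.1 - q.2) ^ (s - 1)) (x, t) := by
    funext x
    congr 1
  rw [hfun]
  exact h

/-! ### a.e. integrability and linearity -/

lemma inner_meas (a s : ℝ) {W : ℝ → ℝ≥0∞} (hW : Measurable W) :
    Measurable fun x => ∫⁻ t in Ioo a x, ENNReal.ofReal ((x - t) ^ (s - 1)) * W t := by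
  have h := (Fker_meas a s hW).lintegral_prod_right' (ν := volume)
  have hfun : (fun x => ∫⁻ t in Ioo a x, ENNReal.ofReal ((x - t) ^ (s - 1)) * W t) =
      fun x => ∫⁻ t, Fker a s W (x, t) := funext (Fker_eq_inner a s W)
  rw [hfun]
  exact h

lemma ae_intble {a b : ℝ} {s : ℝ} (hs : 0 < s) {v : ℝ → ℝ} (hv : Measurable v)
    (hvi : IntegrableOn v (Ioo a b)) :
    ∀ᵐ x ∂(volume.restrict (Ioo a b)),
      IntervalIntegrable (fun t => v t * (x - t) ^ (s - 1)) volume a x := by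
  have hWm : Measurable fun t => (‖v t‖₊ : ℝ≥0∞) := by fun_prop
  have hb : (∫⁻ x in Ioo a b, ∫⁻ t in Ioo a x,
      ENNReal.ofReal ((x - t) ^ (s - 1)) * (‖v t‖₊ : ℝ≥0∞)) ≠ ⊤ := by
    apply ne_of_lt
    apply lt_of_le_of_lt (swap_bound hs hWm)
    exact ENNReal.mul_lt_top ENNReal.ofReal_lt_top hvi.2
  have hfin := ae_lt_top (inner_meas a s hWm) hb
  filter_upwards [hfin, self_mem_ae_restrict measurableSet_Ioo] with x hx hmem
  rw [intervalIntegrable_iff, uIoc_of_le hmem.1.le]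
  constructor
  · exact ((hv.mul (by fun_prop)).aestronglyMeasurable)
  · rw [hasFiniteIntegral_def]
    have heq : (∫⁻ t in Ioc a x, (‖v t * (x - t) ^ (s - 1)‖₊ : ℝ≥0∞)) =
        ∫⁻ t in Ioo a x, ENNReal.ofReal ((x - t) ^ (s - 1)) * (‖v t‖₊ : ℝ≥0∞) := by
      rw [← Measure.restrict_congr_set Ioo_ae_eq_Ioc]
      apply setLIntegral_congr_fun_ae measurableSet_Ioo
      apply ae_of_all
      intro t ht
      rw [nnnorm_mul, ENNReal.coe_mul, mul_comm, ← enorm_eq_nnnorm ((x - t) ^ (s - 1)),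
        Real.enorm_eq_ofReal (Real.rpow_nonneg (by linarith [ht.2]) _)]
    exact heq ▸ hx

lemma RL_sub {a s : ℝ} (hs : 0 < s) {g : ℝ → ℝ} (hg : Continuous g) {v : ℝ → ℝ} {x : ℝ}
    (hvi : IntervalIntegrable (fun t => v t * (x - t) ^ (s - 1)) volume a x) :
    RLint a s v x - RLint a s g x = RLint a s (fun t => v t - g t) x := by
  have hgi : IntervalIntegrable (fun t => g t * (x - t) ^ (s - 1)) volume a x :=
    (ker_intble hs a x x).continuousOn_mul hg.continuousOn
  rw [RLint, RLint, RLint, ← mul_sub, ← intervalIntegral.integral_sub hvi hgi]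
  congr 1
  apply intervalIntegral.integral_congr
  intro t _
  ring

/-! ### Limits -/

lemma tendsto_rpow_exp {d : ℝ} (hd : 0 < d) :
    Tendsto (fun s : ℝ => d ^ s) (nhdsWithin 0 (Ioi 0)) (nhds 1) := by
  have h : Tendsto (fun s : ℝ => d ^ s) (nhds 0) (nhds 1) := by
    have hc : Continuous fun s : ℝ => Real.exp (Real.log d * s) :=
      Real.continuous_exp.comp (continuous_const.mul continuous_id)
    have h0 := hc.tendsto 0
    simp only [mul_zero, Real.exp_zero] at h0
    exact h0.congr fun s => (Real.rpow_def_of_pos hd s).symm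
  exact h.mono_left nhdsWithin_le_nhds

lemma tendsto_sGamma : Tendsto (fun s : ℝ => s * Real.Gamma s) (nhdsWithin 0 (Ioi 0)) (nhds 1) := by
  have hc : ContinuousAt Real.Gamma 1 := by
    apply (Real.differentiableAt_Gamma _).continuousAt
    intro m h
    have h1 : (0:ℝ) ≤ m := Nat.cast_nonneg m
    linarith
  have h : Tendsto (fun s : ℝ => Real.Gamma (s + 1)) (nhdsWithin 0 (Ioi 0)) (nhds 1) := by
    have h1 : Tendsto (fun s : ℝ => s + 1) (nhds 0) (nhds 1) := by
      simpa using (continuous_add_right (1:ℝ)).tendsto 0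
    have := hc.tendsto.comp h1
    rw [Real.Gamma_one] at this
    exact this.mono_left nhdsWithin_le_nhds
  apply h.congr'
  filter_upwards [self_mem_nhdsWithin] with s hs
  rw [Real.Gamma_add_one (ne_of_gt hs)]

lemma tendsto_coef {d : ℝ} (hd : 0 < d) :
    Tendsto (fun s : ℝ => d ^ s / (s * Real.Gamma s)) (nhdsWithin 0 (Ioi 0)) (nhds 1) := by
  have := (tendsto_rpow_exp hd).div tendsto_sGamma one_ne_zero
  simp only [div_one] at this; exact this

lemma gamma_lower : ∃ c : ℝ, 0 < c ∧ ∀ s : ℝ, 0 < s → s ≤ 1 → c ≤ s * Real.Gamma s := by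
  have hcont : ContinuousOn Real.Gamma (Icc 1 2) := by
    intro x hx
    apply ContinuousAt.continuousWithinAt
    apply (Real.differentiableAt_Gamma _).continuousAt
    intro m
    have h1 : (0:ℝ) ≤ m := Nat.cast_nonneg m
    have h2 : (1:ℝ) ≤ x := hx.1
    intro h
    rw [h] at h2
    linarith
  obtain ⟨x0, hx0, hmin⟩ := isCompact_Icc.exists_isMinOn (nonempty_Icc.2 one_le_two) hcont
  refine ⟨Real.Gamma x0, Real.Gamma_pos_of_pos (lt_of_lt_of_le zero_lt_one hx0.1), ?_⟩
  intro s hs hs1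
  rw [← Real.Gamma_add_one (ne_of_gt hs)]
  exact isMinOn_iff.1 hmin (s + 1) ⟨by linarith, by linarith⟩

lemma rpow_le_max {a b x s : ℝ} (hax : a ≤ x) (hxb : x ≤ b) (hs0 : 0 < s) (hs1 : s ≤ 1) :
    (x - a) ^ s ≤ max 1 (b - a) := by
  rcases le_or_gt (x - a) 1 with h | h
  · exact le_trans (Real.rpow_le_one (by linarith) h hs0.le) (le_max_left _ _)
  · calc (x - a) ^ s ≤ (x - a) ^ (1:ℝ) :=
          Real.rpow_le_rpow_of_exponent_le h.le hs1
      _ = x - a := Real.rpow_one _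
      _ ≤ max 1 (b - a) := le_trans (by linarith) (le_max_right _ _)

lemma RL_unif_bound {a b : ℝ} {g : ℝ → ℝ} (hg : Continuous g) {M : ℝ} (hM : ∀ t, |g t| ≤ M)
    {c : ℝ} (hc : 0 < c) (hcΓ : ∀ s : ℝ, 0 < s → s ≤ 1 → c ≤ s * Real.Gamma s)
    {s : ℝ} (hs : 0 < s) (hs1 : s ≤ 1) {x : ℝ} (hx : x ∈ Ioo a b) :
    |RLint a s g x| ≤ c⁻¹ * (M * max 1 (b - a)) := by
  have hM0 : 0 ≤ M := le_trans (abs_nonneg _) (hM 0)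
  have hΓ : 0 < Real.Gamma s := Real.Gamma_pos_of_pos hs
  have hax : a ≤ x := hx.1.le
  rw [RLint, abs_mul, abs_of_nonneg (inv_nonneg.2 hΓ.le)]
  have h1 : |∫ t in a..x, g t * (x - t) ^ (s - 1)| ≤ M * ((x - a) ^ s / s) := by
    have hb := intervalIntegral.norm_integral_le_abs_of_norm_le (μ := volume)
      (f := fun t => g t * (x - t) ^ (s - 1)) (g := fun t => M * (x - t) ^ (s - 1))
      ?bnd ((ker_intble hs a x x).const_mul M)
    case bnd =>
      rw [uIoc_of_le hax]
      apply ae_restrict_of_forall_mem measurableSet_Ioc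
      intro t ht
      have hk0 : (0:ℝ) ≤ (x - t) ^ (s - 1) := Real.rpow_nonneg (by linarith [ht.2]) _
      rw [Real.norm_eq_abs, abs_mul, abs_of_nonneg hk0]
      exact mul_le_mul_of_nonneg_right (hM t) hk0
    rw [Real.norm_eq_abs] at hb
    calc |∫ t in a..x, g t * (x - t) ^ (s - 1)|
        ≤ |∫ t in a..x, M * (x - t) ^ (s - 1)| := hb
      _ = M * ((x - a) ^ s / s) := by
          rw [intervalIntegral.integral_const_mul, ker_integral0 hs hax,
            abs_of_nonneg (mul_nonneg hM0 (div_nonneg (Real.rpow_nonneg (by linarith) _) hs.le))]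
  calc (Real.Gamma s)⁻¹ * |∫ t in a..x, g t * (x - t) ^ (s - 1)|
      ≤ (Real.Gamma s)⁻¹ * (M * ((x - a) ^ s / s)) :=
        mul_le_mul_of_nonneg_left h1 (inv_nonneg.2 hΓ.le)
    _ = M * (x - a) ^ s / (s * Real.Gamma s) := by
        rw [inv_mul_eq_div, ← mul_div_assoc, div_div]
    _ ≤ M * max 1 (b - a) / c := by
        apply div_le_div₀ (by positivity) ?_ hc (hcΓ s hs hs1)
        exact mul_le_mul_of_nonneg_left (rpow_le_max hax hx.2.le hs hs1) hM0
    _ = c⁻¹ * (M * max 1 (b - a)) := by rw [div_eq_inv_mul]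

lemma RL_tendsto_pt {a x : ℝ} (hax : a < x) {g : ℝ → ℝ} (hg : Continuous g) {M : ℝ}
    (hM : ∀ t, |g t| ≤ M) :
    Tendsto (fun s => RLint a s g x) (nhdsWithin 0 (Ioi 0)) (nhds (g x)) := by
  have hM0 : 0 ≤ M := le_trans (abs_nonneg _) (hM 0)
  have hd : 0 < x - a := sub_pos.2 hax
  have key : ∀ s : ℝ, 0 < s → RLint a s g x - g x =
      (Real.Gamma s)⁻¹ * (∫ t in a..x, (g t - g x) * (x - t) ^ (s - 1)) +
        ((x - a) ^ s / (s * Real.Gamma s) - 1) * g x := by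
    intro s hs
    have hΓ : 0 < Real.Gamma s := Real.Gamma_pos_of_pos hs
    have hgi : IntervalIntegrable (fun t => g t * (x - t) ^ (s - 1)) volume a x :=
      (ker_intble hs a x x).continuousOn_mul hg.continuousOn
    have hgxi : IntervalIntegrable (fun t => g x * (x - t) ^ (s - 1)) volume a x :=
      (ker_intble hs a x x).const_mul (g x)
    have hsub : ∫ t in a..x, (g t - g x) * (x - t) ^ (s - 1) =
        (∫ t in a..x, g t * (x - t) ^ (s - 1)) - g x * ((x - a) ^ s / s) := by
      have : ∫ t in a..x, (g t - g x) * (x - t) ^ (s - 1) =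
          ∫ t in a..x, (g t * (x - t) ^ (s - 1) - g x * (x - t) ^ (s - 1)) := by
        apply intervalIntegral.integral_congr
        intro t _
        ring
      rw [this, intervalIntegral.integral_sub hgi hgxi,
        intervalIntegral.integral_const_mul, ker_integral0 hs hax.le]
    rw [RLint, hsub]
    field_simp
    ring
  have hT2 : Tendsto (fun s : ℝ => ((x - a) ^ s / (s * Real.Gamma s) - 1) * g x)
      (nhdsWithin 0 (Ioi 0)) (nhds 0) := by
    have := ((tendsto_coef hd).sub_const 1).mul_const (g x)
    simpa using this
  have hT1 : Tendsto (fun s : ℝ => (Real.Gamma s)⁻¹ *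
      ∫ t in a..x, (g t - g x) * (x - t) ^ (s - 1)) (nhdsWithin 0 (Ioi 0)) (nhds 0) := by
    rw [NormedAddCommGroup.tendsto_nhds_zero]
    intro ε hε
    obtain ⟨δ0, hδ0, hδ0'⟩ := Metric.continuous_iff.1 hg x (ε / 4) (by positivity)
    set δ := min (δ0 / 2) ((x - a) / 2) with hδdef
    have hδpos : 0 < δ := lt_min (by positivity) (by positivity)
    have hδlt : δ < x - a := lt_of_le_of_lt (min_le_right _ _) (by linarith)
    have hδle : δ ≤ δ0 / 2 := min_le_left _ _
    set R : ℝ → ℝ := fun s =>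
      (2 * M * ((x - a) ^ s - δ ^ s) + ε / 4 * δ ^ s) / (s * Real.Gamma s) with hRdef
    have hR : Tendsto R (nhdsWithin 0 (Ioi 0)) (nhds (ε / 4)) := by
      have hnum : Tendsto (fun s : ℝ => 2 * M * ((x - a) ^ s - δ ^ s) + ε / 4 * δ ^ s)
          (nhdsWithin 0 (Ioi 0)) (nhds (ε / 4)) := by
        have h1 := ((tendsto_rpow_exp hd).sub (tendsto_rpow_exp hδpos)).const_mul (2 * M)
        have h2 := (tendsto_rpow_exp hδpos).const_mul (ε / 4)
        have := h1.add h2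
        norm_num at this
        exact this
      have := hnum.div tendsto_sGamma one_ne_zero
      simp only [div_one] at this; exact this
    have hbound : ∀ᶠ s in nhdsWithin 0 (Ioi 0), ‖(Real.Gamma s)⁻¹ *
        ∫ t in a..x, (g t - g x) * (x - t) ^ (s - 1)‖ ≤ R s := by
      filter_upwards [self_mem_nhdsWithin] with s hs
      have hs' : (0:ℝ) < s := hs
      have hΓ : 0 < Real.Gamma s := Real.Gamma_pos_of_pos hs'
      have hI1 : IntervalIntegrable (fun t => (g t - g x) * (x - t) ^ (s - 1)) volume a (x - δ) :=
        (ker_intble hs' a (x - δ) x).continuousOn_mul (hg.sub continuous_const).continuousOn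
      have hI2 : IntervalIntegrable (fun t => (g t - g x) * (x - t) ^ (s - 1)) volume (x - δ) x :=
        (ker_intble hs' (x - δ) x x).continuousOn_mul (hg.sub continuous_const).continuousOn
      have hsplit : ∫ t in a..x, (g t - g x) * (x - t) ^ (s - 1) =
          (∫ t in a..(x - δ), (g t - g x) * (x - t) ^ (s - 1)) +
          ∫ t in (x - δ)..x, (g t - g x) * (x - t) ^ (s - 1) :=
        (intervalIntegral.integral_add_adjacent_intervals hI1 hI2).symm
      have hB1 : |∫ t in a..(x - δ), (g t - g x) * (x - t) ^ (s - 1)| ≤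
          2 * M * (((x - a) ^ s - δ ^ s) / s) := by
        have hb := intervalIntegral.norm_integral_le_abs_of_norm_le (μ := volume)
          (f := fun t => (g t - g x) * (x - t) ^ (s - 1))
          (g := fun t => 2 * M * (x - t) ^ (s - 1)) ?bnd1
          ((ker_intble hs' a (x - δ) x).const_mul (2 * M))
        case bnd1 =>
          rw [uIoc_of_le (by linarith)]
          apply ae_restrict_of_forall_mem measurableSet_Ioc
          intro t ht
          have hk0 : (0:ℝ) ≤ (x - t) ^ (s - 1) := Real.rpow_nonneg (by linarith [ht.2]) _
          rw [Real.norm_eq_abs, abs_mul, abs_of_nonneg hk0]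
          apply mul_le_mul_of_nonneg_right ?_ hk0
          calc |g t - g x| ≤ |g t| + |g x| := abs_sub _ _
            _ ≤ 2 * M := by linarith [hM t, hM x]
        rw [Real.norm_eq_abs] at hb
        calc |∫ t in a..(x - δ), (g t - g x) * (x - t) ^ (s - 1)|
            ≤ |∫ t in a..(x - δ), 2 * M * (x - t) ^ (s - 1)| := hb
          _ = 2 * M * (((x - a) ^ s - δ ^ s) / s) := by
              have hle : δ ^ s ≤ (x - a) ^ s :=
                Real.rpow_le_rpow hδpos.le hδlt.le hs'.le
              rw [intervalIntegral.integral_const_mul, ker_integral hs' (by linarith),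
                show x - (x - δ) = δ by ring,
                abs_of_nonneg (mul_nonneg (by linarith) (div_nonneg (by linarith) hs'.le))]
      have hB2 : |∫ t in (x - δ)..x, (g t - g x) * (x - t) ^ (s - 1)| ≤
          ε / 4 * (δ ^ s / s) := by
        have hb := intervalIntegral.norm_integral_le_abs_of_norm_le (μ := volume)
          (f := fun t => (g t - g x) * (x - t) ^ (s - 1))
          (g := fun t => ε / 4 * (x - t) ^ (s - 1)) ?bnd2
          ((ker_intble hs' (x - δ) x x).const_mul (ε / 4))
        case bnd2 =>
          rw [uIoc_of_le (by linarith)]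
          apply ae_restrict_of_forall_mem measurableSet_Ioc
          intro t ht
          have hk0 : (0:ℝ) ≤ (x - t) ^ (s - 1) := Real.rpow_nonneg (by linarith [ht.2]) _
          rw [Real.norm_eq_abs, abs_mul, abs_of_nonneg hk0]
          apply mul_le_mul_of_nonneg_right ?_ hk0
          have hdist : dist t x < δ0 := by
            rw [Real.dist_eq, abs_of_nonpos (by linarith [ht.2])]
            have := ht.1
            linarith
          exact (le_of_lt (by simpa [Real.dist_eq] using hδ0' t hdist))
        rw [Real.norm_eq_abs] at hb
        calc |∫ t in (x - δ)..x, (g t - g x) * (x - t) ^ (s - 1)|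
            ≤ |∫ t in (x - δ)..x, ε / 4 * (x - t) ^ (s - 1)| := hb
          _ = ε / 4 * (δ ^ s / s) := by
              rw [intervalIntegral.integral_const_mul, ker_integral0 hs' (by linarith),
                show x - (x - δ) = δ by ring, abs_of_nonneg (by positivity)]
      have habs : |∫ t in a..x, (g t - g x) * (x - t) ^ (s - 1)| ≤
          2 * M * (((x - a) ^ s - δ ^ s) / s) + ε / 4 * (δ ^ s / s) := by
        rw [hsplit]
        exact le_trans (abs_add_le _ _) (add_le_add hB1 hB2)
      rw [Real.norm_eq_abs, abs_mul, abs_of_nonneg (inv_nonneg.2 hΓ.le)]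
      calc (Real.Gamma s)⁻¹ * |∫ t in a..x, (g t - g x) * (x - t) ^ (s - 1)|
          ≤ (Real.Gamma s)⁻¹ * (2 * M * (((x - a) ^ s - δ ^ s) / s) + ε / 4 * (δ ^ s / s)) :=
            mul_le_mul_of_nonneg_left habs (inv_nonneg.2 hΓ.le)
        _ = R s := by
            rw [hRdef]
            field_simp
    have hRlt : ∀ᶠ s in nhdsWithin 0 (Ioi 0), R s < ε := hR.eventually_lt_const (by linarith)
    filter_upwards [hbound, hRlt] with s h1 h2
    exact lt_of_le_of_lt h1 h2
  have hsum := hT1.add hT2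
  norm_num at hsum
  have : Tendsto (fun s => RLint a s g x - g x) (nhdsWithin 0 (Ioi 0)) (nhds 0) := by
    apply hsum.congr'
    filter_upwards [self_mem_nhdsWithin] with s hs
    exact (key s hs).symm
  have := this.add_const (g x)
  norm_num at this
  exact this

/-! ### Term B -/

lemma termB {a b : ℝ} (hab : a < b) {p : ℝ≥0∞} (hp : 1 ≤ p) (hp' : p ≠ ⊤)
    {g : ℝ → ℝ} (hg : Continuous g) {M : ℝ} (hM : ∀ t, |g t| ≤ M) :
    Tendsto (fun s : ℝ => eLpNorm (fun x => RLint a s g x - g x) p (volume.restrict (Ioo a b)))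
      (nhdsWithin 0 (Ioi 0)) (nhds 0) := by
  obtain ⟨c, hc, hcΓ⟩ := gamma_lower
  have hM0 : 0 ≤ M := le_trans (abs_nonneg _) (hM 0)
  set C : ℝ := c⁻¹ * (M * max 1 (b - a)) + M with hCdef
  have hC0 : 0 ≤ C := by positivity
  have hp0 : p ≠ 0 := (lt_of_lt_of_le zero_lt_one hp).ne'
  set P := p.toReal with hPdef
  have hP1 : 1 ≤ P := by
    rw [hPdef, ← ENNReal.toReal_one]
    exact ENNReal.toReal_mono hp' hp
  have hP0 : (0:ℝ) < P := lt_of_lt_of_le zero_lt_one hP1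
  have hgm : Measurable g := hg.measurable
  -- rewrite the eLpNorm via the measurable representative
  have hrw : ∀ s : ℝ, eLpNorm (fun x => RLint a s g x - g x) p (volume.restrict (Ioo a b)) =
      (∫⁻ x in Ioo a b, ENNReal.ofReal (|RLm a s g x - g x| ^ P)) ^ (1 / P) := by
    intro s
    rw [eLpNorm_eq_lintegral_rpow_enorm_toReal hp0 hp', ← hPdef]
    congr 1
    apply setLIntegral_congr_fun_ae measurableSet_Ioo
    apply ae_of_all
    intro x hx
    rw [← RLm_eq a s g hx.1.le, Real.enorm_eq_ofReal_abs,
      ENNReal.ofReal_rpow_of_nonneg (abs_nonneg _) hP0.le]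
  have main : Tendsto (fun s : ℝ => ∫⁻ x in Ioo a b, ENNReal.ofReal (|RLm a s g x - g x| ^ P))
      (nhdsWithin 0 (Ioi 0)) (nhds 0) := by
    have h0 : (0:ℝ≥0∞) = ∫⁻ _x in Ioo a b, (fun _ => (0:ℝ≥0∞)) _x := by simp
    rw [h0]
    apply tendsto_lintegral_filter_of_dominated_convergence
      (fun _ => ENNReal.ofReal (C ^ P))
    · apply Eventually.of_forall
      intro s
      apply Measurable.ennreal_ofReal
      have : Measurable fun x => RLm a s g x - g x := ((RLm_meas a s hgm).measurable).sub hgm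
      fun_prop
    · filter_upwards [Ioo_mem_nhdsGT_of_mem (by exact ⟨le_refl (0:ℝ), zero_lt_one⟩)] with s hs
      rw [ae_restrict_iff' measurableSet_Ioo]
      apply ae_of_all
      intro x hx
      apply ENNReal.ofReal_le_ofReal
      apply Real.rpow_le_rpow (abs_nonneg _) ?_ hP0.le
      rw [RLm_eq a s g hx.1.le]
      calc |RLint a s g x - g x| ≤ |RLint a s g x| + |g x| := abs_sub _ _
        _ ≤ c⁻¹ * (M * max 1 (b - a)) + M :=
            add_le_add (RL_unif_bound hg hM hc hcΓ hs.1 hs.2.le hx) (hM x)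
    · rw [lintegral_const]
      exact ENNReal.mul_ne_top ENNReal.ofReal_ne_top (by simp [Real.volume_Ioo])
    · rw [ae_restrict_iff' measurableSet_Ioo]
      apply ae_of_all
      intro x hx
      have h1 : Tendsto (fun s => RLm a s g x - g x) (nhdsWithin 0 (Ioi 0)) (nhds 0) := by
        have heq : (fun s => RLm a s g x - g x) = fun s => RLint a s g x - g x := by
          funext s
          rw [RLm_eq a s g hx.1.le]
        rw [heq]
        have := (RL_tendsto_pt hx.1 hg hM).sub_const (g x)
        simpa using this
      have h2 : Tendsto (fun s => |RLm a s g x - g x| ^ P) (nhdsWithin 0 (Ioi 0)) (nhds 0) := by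
        have habs := h1.abs
        norm_num at habs
        have hcont := (Real.continuousAt_rpow_const 0 P (Or.inr hP0.le)).tendsto
        rw [Real.zero_rpow hP0.ne'] at hcont
        exact hcont.comp habs
      have := (ENNReal.continuous_ofReal.tendsto 0).comp h2
      simpa [Function.comp_def] using this
  rw [show (fun s : ℝ => eLpNorm (fun x => RLint a s g x - g x) p (volume.restrict (Ioo a b))) =
      fun s : ℝ => (∫⁻ x in Ioo a b, ENNReal.ofReal (|RLm a s g x - g x| ^ P)) ^ (1 / P)
    from funext hrw]
  rw [ENNReal.tendsto_nhds_zero]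
  intro ε hε
  rcases eq_or_ne ε ⊤ with rfl | hεtop
  · exact Eventually.of_forall fun _ => le_top
  have hεP : (0:ℝ≥0∞) < ε ^ P := ENNReal.rpow_pos hε hεtop
  filter_upwards [ENNReal.tendsto_nhds_zero.1 main (ε ^ P) hεP] with s hs
  calc (∫⁻ x in Ioo a b, ENNReal.ofReal (|RLm a s g x - g x| ^ P)) ^ (1 / P)
      ≤ (ε ^ P) ^ (1 / P) := ENNReal.rpow_le_rpow hs (by positivity)
    _ = ε := by rw [← ENNReal.rpow_mul, mul_one_div_cancel hP0.ne', ENNReal.rpow_one]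

end RLaux

open RLaux in
/-- `‖I_{a+}^s[u] − u‖_{L^p(a,b)} → 0` as `s → 0+`. -/
theorem rl_fracint_tendsto_id (a b : ℝ) (hab : a < b) (p : ℝ≥0∞) (hp : 1 ≤ p) (hp' : p ≠ ⊤)
    (u : ℝ → ℝ) (hu : MemLp u p (volume.restrict (Set.Ioo a b))) :
    Filter.Tendsto
      (fun s : ℝ => eLpNorm (fun x => RLint a s u x - u x) p (volume.restrict (Set.Ioo a b)))
      (nhdsWithin 0 (Set.Ioi 0)) (nhds 0) := by
  have hp0 : p ≠ 0 := (lt_of_lt_of_le zero_lt_one hp).ne'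
  have hd : (0:ℝ) < b - a := sub_pos.2 hab
  -- replace u by a measurable representative
  obtain ⟨u', hu'sm, huu'⟩ :
      ∃ u' : ℝ → ℝ, StronglyMeasurable u' ∧ u =ᵐ[volume.restrict (Set.Ioo a b)] u' :=
    ⟨hu.1.mk u, hu.1.stronglyMeasurable_mk, hu.1.ae_eq_mk⟩
  have hu'm : Measurable u' := hu'sm.measurable
  have hu' : MemLp u' p (volume.restrict (Set.Ioo a b)) := hu.ae_eq huu'
  have haevol : ∀ᵐ t ∂volume, t ∈ Set.Ioo a b → u t = u' t :=
    (ae_restrict_iff' measurableSet_Ioo).1 huu'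
  have hRLeq : ∀ s : ℝ, ∀ x ∈ Set.Ioo a b, RLint a s u x = RLint a s u' x := by
    intro s x hx
    rw [RLint, RLint]
    congr 1
    apply intervalIntegral.integral_congr_ae
    filter_upwards [haevol] with t ht hmem
    rw [uIoc_of_le hx.1.le] at hmem
    have : t ∈ Set.Ioo a b := ⟨hmem.1, lt_of_le_of_lt hmem.2 hx.2⟩
    rw [ht this]
  have hfeq : ∀ s : ℝ,
      eLpNorm (fun x => RLint a s u x - u x) p (volume.restrict (Set.Ioo a b)) =
      eLpNorm (fun x => RLint a s u' x - u' x) p (volume.restrict (Set.Ioo a b)) := by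
    intro s
    apply eLpNorm_congr_ae
    filter_upwards [self_mem_ae_restrict measurableSet_Ioo, huu'] with x hx hux
    rw [hRLeq s x hx, hux]
  rw [show (fun s : ℝ =>
        eLpNorm (fun x => RLint a s u x - u x) p (volume.restrict (Set.Ioo a b))) =
      fun s : ℝ => eLpNorm (fun x => RLint a s u' x - u' x) p (volume.restrict (Set.Ioo a b))
    from funext hfeq]
  -- start of main argument
  rw [ENNReal.tendsto_nhds_zero]
  intro ε hε
  have hε4 : (0:ℝ≥0∞) < ε / 4 := ENNReal.div_pos hε.ne' (by norm_num)
  obtain ⟨g, hgsupp, hug, hgcont, hgmem⟩ :=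
    hu'.exists_hasCompactSupport_eLpNorm_sub_le hp' hε4.ne'
  obtain ⟨M, hM⟩ := hgcont.bounded_above_of_compact_support hgsupp
  have hM' : ∀ t, |g t| ≤ M := by
    intro t
    rw [← Real.norm_eq_abs]
    exact hM t
  -- integrability of u' - g
  have hwint : IntegrableOn (fun t => u' t - g t) (Set.Ioo a b) := by
    have h1 : MemLp (fun t => u' t - g t) p (volume.restrict (Set.Ioo a b)) := hu'.sub hgmem
    have h2 := h1.mono_exponent hp
    exact memLp_one_iff_integrable.1 h2
  have hwm : Measurable fun t => u' t - g t := hu'm.sub hgcont.measurable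
  -- eventual facts
  have hEcoef : ∀ᶠ s in nhdsWithin (0:ℝ) (Set.Ioi 0),
      ENNReal.ofReal ((b - a) ^ s / (s * Real.Gamma s)) ≤ 2 := by
    have h1 : Tendsto (fun s : ℝ => ENNReal.ofReal ((b - a) ^ s / (s * Real.Gamma s)))
        (nhdsWithin 0 (Set.Ioi 0)) (nhds 1) := by
      have := (ENNReal.continuous_ofReal.tendsto 1).comp (tendsto_coef hd)
      simpa [Function.comp_def] using this
    exact h1.eventually_le_const (by norm_num)
  have hEB := ENNReal.tendsto_nhds_zero.1 (termB hab hp hp' hgcont hM') (ε / 4) hε4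
  filter_upwards [Ioo_mem_nhdsGT_of_mem (by exact ⟨le_refl (0:ℝ), zero_lt_one⟩),
    hEcoef, hEB] with s hsIoo hcoef hB
  have hs : (0:ℝ) < s := hsIoo.1
  -- a.e. split of the function
  have hsplit : eLpNorm (fun x => RLint a s u' x - u' x) p (volume.restrict (Set.Ioo a b)) ≤
      eLpNorm (fun x => RLint a s u' x - RLint a s g x) p (volume.restrict (Set.Ioo a b)) +
      (eLpNorm (fun x => RLint a s g x - g x) p (volume.restrict (Set.Ioo a b)) +
       eLpNorm (fun x => g x - u' x) p (volume.restrict (Set.Ioo a b))) := by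
    have hA1 : AEStronglyMeasurable (fun x => RLint a s u' x - RLint a s g x)
        (volume.restrict (Set.Ioo a b)) := by
      apply AEStronglyMeasurable.congr
        (f := fun x => RLm a s u' x - RLm a s g x)
      · exact ((RLm_meas a s hu'm).sub (RLm_meas a s hgcont.measurable)).aestronglyMeasurable
      · filter_upwards [self_mem_ae_restrict measurableSet_Ioo] with x hx
        rw [RLm_eq a s u' hx.1.le, RLm_eq a s g hx.1.le]
    have hA2 : AEStronglyMeasurable (fun x => RLint a s g x - g x)
        (volume.restrict (Set.Ioo a b)) := by
      apply AEStronglyMeasurable.congr (f := fun x => RLm a s g x - g x)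
      · exact ((RLm_meas a s hgcont.measurable).measurable.sub
          hgcont.measurable).aestronglyMeasurable
      · filter_upwards [self_mem_ae_restrict measurableSet_Ioo] with x hx
        rw [RLm_eq a s g hx.1.le]
    have hA3 : AEStronglyMeasurable (fun x => g x - u' x) (volume.restrict (Set.Ioo a b)) :=
      (hgcont.measurable.sub hu'm).aestronglyMeasurable
    have heq : (fun x => RLint a s u' x - u' x) = fun x =>
        (RLint a s u' x - RLint a s g x) + ((RLint a s g x - g x) + (g x - u' x)) := by
      funext x
      ring
    rw [heq]
    calc eLpNorm (fun x => (RLint a s u' x - RLint a s g x) +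
          ((RLint a s g x - g x) + (g x - u' x))) p (volume.restrict (Set.Ioo a b))
        ≤ eLpNorm (fun x => RLint a s u' x - RLint a s g x) p (volume.restrict (Set.Ioo a b)) +
          eLpNorm (fun x => (RLint a s g x - g x) + (g x - u' x)) p
            (volume.restrict (Set.Ioo a b)) := eLpNorm_add_le hA1 (hA2.add hA3) hp
      _ ≤ _ := by
          apply add_le_add_right
          exact eLpNorm_add_le hA2 hA3 hp
  -- bound term 1 via Schur
  have hT1 : eLpNorm (fun x => RLint a s u' x - RLint a s g x) p (volume.restrict (Set.Ioo a b)) ≤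
      2 * (ε / 4) := by
    have he : eLpNorm (fun x => RLint a s u' x - RLint a s g x) p
        (volume.restrict (Set.Ioo a b)) =
        eLpNorm (fun x => RLint a s (fun t => u' t - g t) x) p (volume.restrict (Set.Ioo a b)) := by
      apply eLpNorm_congr_ae
      have hint : IntegrableOn u' (Set.Ioo a b) := by
        have h2 := hu'.mono_exponent hp
        exact memLp_one_iff_integrable.1 h2
      filter_upwards [ae_intble hs hu'm hint] with x hx
      exact RL_sub hs hgcont hx
    rw [he]
    calc eLpNorm (fun x => RLint a s (fun t => u' t - g t) x) p (volume.restrict (Set.Ioo a b))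
        ≤ ENNReal.ofReal ((b - a) ^ s / (s * Real.Gamma s)) *
          eLpNorm (fun t => u' t - g t) p (volume.restrict (Set.Ioo a b)) :=
          schur hs hp hp' hwm
      _ ≤ 2 * (ε / 4) := by
          apply mul_le_mul' hcoef
          exact hug
  -- final combination
  have hT3 : eLpNorm (fun x => g x - u' x) p (volume.restrict (Set.Ioo a b)) ≤ ε / 4 := by
    have heq : eLpNorm (g - u') p (volume.restrict (Set.Ioo a b)) =
        eLpNorm (u' - g) p (volume.restrict (Set.Ioo a b)) := eLpNorm_sub_comm g u' p _
    exact le_trans (le_of_eq heq) hug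
  calc eLpNorm (fun x => RLint a s u' x - u' x) p (volume.restrict (Set.Ioo a b))
      ≤ 2 * (ε / 4) + (ε / 4 + ε / 4) := le_trans hsplit (add_le_add hT1 (add_le_add hB hT3))
    _ = 4 * (ε / 4) := by ring
    _ = ε := by
        rw [mul_comm]
        exact ENNReal.div_mul_cancel (by norm_num) (by norm_num)
end

section
/- Let a < b be real numbers, s ∈ (0,1) and p ∈ (1/s, ∞). Then for every u ∈ L^p(a,b) the integral defining I_{a+}^s[u](x) converges absolutely for every x ∈ [a,b], and there exists a constant C > 0, depending only on a, b, s and p, such that |I_{a+}^s[u](x) − I_{a+}^s[u](y)| ≤ C ‖u‖_{L^p(a,b)} |x−y|^{s−1/p} for all x, y ∈ [a,b]; in particular I_{a+}^s[u] is Hölder continuous of exponent s − 1/p on [a,b]. -/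
open MeasureTheory Set Filter ENNReal

lemma rpow_sub_le_sub_rpow {A B q : ℝ} (hB : 0 ≤ B) (hBA : B ≤ A) (hq : 1 ≤ q) :
    (A - B) ^ q ≤ A ^ q - B ^ q := by
  have hq0 : 0 < q := by linarith
  have h := NNReal.rpow_add_rpow_le_add ((A - B).toNNReal) (B.toNNReal) hq
  have h2 : (A - B).toNNReal + B.toNNReal = A.toNNReal := by
    rw [← Real.toNNReal_add (by linarith) hB]; congr 1; ring
  rw [h2] at h
  have h3 := (NNReal.coe_le_coe).2 h
  push_cast [NNReal.coe_rpow] at h3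
  rw [Real.coe_toNNReal _ (by linarith), Real.coe_toNNReal _ hB,
    Real.coe_toNNReal _ (by linarith : (0:ℝ) ≤ A)] at h3
  have hnn : (0:ℝ) ≤ (A - B) ^ q + B ^ q := by
    have := Real.rpow_nonneg (x := A - B) (by linarith) q
    have := Real.rpow_nonneg (x := B) hB q
    linarith
  have h4 : (((A - B) ^ q + B ^ q) ^ (1 / q)) ^ q ≤ A ^ q :=
    Real.rpow_le_rpow (Real.rpow_nonneg hnn _) h3 hq0.le
  rw [← Real.rpow_mul hnn, one_div, inv_mul_cancel₀ hq0.ne', Real.rpow_one] at h4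
  linarith

/-- for `p > 1/s`, the fractional integral maps `L^p(a,b)` into the Hölder
class of exponent `s - 1/p`, with a constant depending only on `a, b, s, p`. -/
theorem rl_fracint_holder_of_Lp (a b s p : ℝ) (hab : a < b) (hs : s ∈ Set.Ioo (0:ℝ) 1)
    (hp : 1 / s < p) :
    ∃ C > (0:ℝ), ∀ u : ℝ → ℝ,
      MemLp u (ENNReal.ofReal p) (volume.restrict (Set.Ioo a b)) →
        (∀ x ∈ Set.Icc a b,
          IntervalIntegrable (fun t => u t * (x - t) ^ (s - 1)) volume a x) ∧
        (∀ x ∈ Set.Icc a b, ∀ y ∈ Set.Icc a b,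
          |RLint a s u x - RLint a s u y| ≤
            C * (eLpNorm u (ENNReal.ofReal p) (volume.restrict (Set.Ioo a b))).toReal *
              |x - y| ^ (s - 1 / p)) := by
  obtain ⟨hs0, hs1⟩ := hs
  have hp1 : 1 < p := by
    have h1 : 1 < 1 / s := by rw [lt_div_iff₀ hs0]; linarith
    linarith
  have hp0 : 0 < p := by linarith
  obtain ⟨q, hqdef⟩ : ∃ q' : ℝ, q' = p / (p - 1) := ⟨_, rfl⟩
  have hpq : p.HolderConjugate q := hqdef ▸ Real.HolderConjugate.conjExponent hp1
  have hq0 : 0 < q := hpq.symm.pos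
  have hq1 : 1 ≤ q := hpq.symm.lt.le
  have hsp : 1 < p * s := (div_lt_iff₀ hs0).mp hp
  obtain ⟨r, hrdef⟩ : ∃ r' : ℝ, r' = (s - 1) * q := ⟨_, rfl⟩
  have hqp : (p - 1) * q = p := hpq.sub_one_mul_conj
  have hr : -1 < r := by
    rw [hrdef, hqdef, mul_div_assoc']
    rw [lt_div_iff₀ (by linarith)]
    nlinarith
  have hr1 : 0 < r + 1 := by linarith
  have hexp : (r + 1) * (1 / q) = s - 1 / p := by
    rw [hrdef]
    field_simp
    nlinarith [hqp]
  have hGamma : 0 < Real.Gamma s := Real.Gamma_pos_of_pos hs0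
  have hpow : 0 < (r + 1) ^ (1 / q) := Real.rpow_pos_of_pos hr1 _
  refine ⟨2 * (Real.Gamma s)⁻¹ / (r + 1) ^ (1 / q),
    div_pos (by positivity) hpow, fun u hu => ?_⟩
  have hP0 : ENNReal.ofReal p ≠ 0 := (ENNReal.ofReal_pos.mpr hp0).ne'
  have hPtop : ENNReal.ofReal p ≠ ∞ := ENNReal.ofReal_ne_top
  have hPtoReal : (ENNReal.ofReal p).toReal = p := ENNReal.toReal_ofReal hp0.le
  have hQ0 : ENNReal.ofReal q ≠ 0 := (ENNReal.ofReal_pos.mpr hq0).ne'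
  have hQtoReal : (ENNReal.ofReal q).toReal = q := ENNReal.toReal_ofReal hq0.le
  obtain ⟨N, hNdef⟩ : ∃ N' : ℝ, N' = (∫ t in Set.Ioo a b, |u t| ^ p) ^ (1 / p) := ⟨_, rfl⟩
  have hNnonneg : 0 ≤ N := by
    rw [hNdef]; positivity
  have hNtoReal : (eLpNorm u (ENNReal.ofReal p) (volume.restrict (Set.Ioo a b))).toReal = N := by
    rw [hu.eLpNorm_eq_integral_rpow_norm hP0 hPtop,
      ENNReal.toReal_ofReal (by positivity), hNdef, hPtoReal, one_div]
    congr 1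
  -- integrability of |u|^p
  have huP : Integrable (fun t => |u t| ^ p) (volume.restrict (Set.Ioo a b)) := by
    have h := hu.integrable_norm_rpow hP0 hPtop
    refine h.congr (Eventually.of_forall fun t => ?_)
    simp [hPtoReal, Real.norm_eq_abs]
  -- restriction of u
  have hures : ∀ {E : Set ℝ}, E ⊆ Set.Ioo a b →
      MemLp u (ENNReal.ofReal p) (volume.restrict E) := by
    intro E hE
    have h := hu.restrict E
    rwa [Measure.restrict_restrict_of_subset hE] at h
  -- kernel interval integrability
  have kerintble : ∀ c d e : ℝ, IntervalIntegrable (fun t => (e - t) ^ r) volume c d := by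
    intro c d e
    have h := (intervalIntegral.intervalIntegrable_rpow' hr (a := e - c) (b := e - d)).comp_sub_left e
    simpa using h
  -- kernel integral values
  have kerval : ∀ c d e : ℝ,
      ∫ t in c..d, (e - t) ^ r = ((e - c) ^ (r + 1) - (e - d) ^ (r + 1)) / (r + 1) := by
    intro c d e
    rw [intervalIntegral.integral_comp_sub_left (fun v => v ^ r) e,
      integral_rpow (Or.inl hr)]
  -- restricted kernel integrability
  have kerres : ∀ c d e : ℝ, c ≤ d →
      Integrable (fun t => (e - t) ^ r) (volume.restrict (Set.Ioo c d)) := by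
    intro c d e hcd
    have h1 := kerintble c d e
    rw [intervalIntegrable_iff_integrableOn_Ioc_of_le hcd] at h1
    exact h1.mono_set Set.Ioo_subset_Ioc_self
  -- Hölder step
  have holder : ∀ c d : ℝ, Set.Ioo c d ⊆ Set.Ioo a b → ∀ g : ℝ → ℝ,
      AEStronglyMeasurable g (volume.restrict (Set.Ioo c d)) →
      (∀ t ∈ Set.Ioo c d, 0 ≤ g t) →
      Integrable (fun t => g t ^ q) (volume.restrict (Set.Ioo c d)) →
      ∫ t in Set.Ioo c d, |u t| * g t ≤ N * (∫ t in Set.Ioo c d, g t ^ q) ^ (1 / q) := by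
    intro c d hsub g hgm hgnn hgq
    have hunn : 0 ≤ᵐ[volume.restrict (Set.Ioo c d)] fun t => |u t| :=
      Eventually.of_forall fun t => abs_nonneg _
    have hgnn' : 0 ≤ᵐ[volume.restrict (Set.Ioo c d)] g :=
      ae_restrict_of_forall_mem measurableSet_Ioo hgnn
    have huu : MemLp (fun t => |u t|) (ENNReal.ofReal p) (volume.restrict (Set.Ioo c d)) := by
      exact (hures hsub).norm
    have hgq' : MemLp g (ENNReal.ofReal q) (volume.restrict (Set.Ioo c d)) := by
      refine (memLp_norm_rpow_iff hgm hQ0 ENNReal.ofReal_ne_top).mp ?_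
      rw [ENNReal.div_self hQ0 ENNReal.ofReal_ne_top, memLp_one_iff_integrable]
      refine hgq.congr (ae_restrict_of_forall_mem measurableSet_Ioo fun t ht => ?_)
      simp only [hQtoReal, Real.norm_eq_abs, abs_of_nonneg (hgnn t ht)]
    have H := integral_mul_le_Lp_mul_Lq_of_nonneg hpq hunn hgnn' huu hgq'
    have mono1 : ∫ t in Set.Ioo c d, |u t| ^ p ≤ ∫ t in Set.Ioo a b, |u t| ^ p :=
      setIntegral_mono_set huP (Eventually.of_forall fun t => by positivity)
        (HasSubset.Subset.eventuallyLE hsub)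
    have hint_nonneg : 0 ≤ ∫ t in Set.Ioo c d, |u t| ^ p :=
      integral_nonneg fun t => by positivity
    have h1 : (∫ t in Set.Ioo c d, |u t| ^ p) ^ (1 / p) ≤ N := by
      rw [hNdef]
      exact Real.rpow_le_rpow hint_nonneg mono1 (by positivity)
    calc ∫ t in Set.Ioo c d, |u t| * g t
        ≤ (∫ t in Set.Ioo c d, |u t| ^ p) ^ (1 / p) *
            (∫ t in Set.Ioo c d, g t ^ q) ^ (1 / q) := H
      _ ≤ N * (∫ t in Set.Ioo c d, g t ^ q) ^ (1 / q) := by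
          refine mul_le_mul_of_nonneg_right h1 ?_
          have h2 : 0 ≤ ∫ t in Set.Ioo c d, g t ^ q :=
            setIntegral_nonneg measurableSet_Ioo fun t ht => Real.rpow_nonneg (hgnn t ht) q
          positivity
  -- MemLp of kernel
  have memq : ∀ c d e : ℝ, c ≤ d → d ≤ e →
      MemLp (fun t => (e - t) ^ (s - 1)) (ENNReal.ofReal q) (volume.restrict (Set.Ioo c d)) := by
    intro c d e hcd hde
    have hgm : AEStronglyMeasurable (fun t : ℝ => (e - t) ^ (s - 1))
        (volume.restrict (Set.Ioo c d)) :=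
      ((measurable_const.sub measurable_id).pow_const _).aestronglyMeasurable
    refine (memLp_norm_rpow_iff hgm hQ0 ENNReal.ofReal_ne_top).mp ?_
    rw [ENNReal.div_self hQ0 ENNReal.ofReal_ne_top, memLp_one_iff_integrable]
    refine (kerres c d e hcd).congr (ae_restrict_of_forall_mem measurableSet_Ioo fun t ht => ?_)
    have h1 : (0:ℝ) < e - t := by have := ht.2; linarith
    simp only [hQtoReal, Real.norm_eq_abs, hrdef]
    rw [abs_of_nonneg (Real.rpow_nonneg h1.le _), Real.rpow_mul h1.le]
  have h1pq : (1:ℝ≥0∞) / 1 = 1 / ENNReal.ofReal p + 1 / ENNReal.ofReal q := by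
    simp only [one_div, inv_one]
    exact hpq.inv_add_inv_ennreal.symm
  -- Part 1 : integrability
  have part1 : ∀ x ∈ Set.Icc a b,
      IntervalIntegrable (fun t => u t * (x - t) ^ (s - 1)) volume a x := by
    intro x hx
    rw [intervalIntegrable_iff_integrableOn_Ioc_of_le hx.1,
      integrableOn_Ioc_iff_integrableOn_Ioo]
    have hsub : Set.Ioo a x ⊆ Set.Ioo a b := Set.Ioo_subset_Ioo le_rfl hx.2
    have hprod := (memq a x x hx.1 le_rfl).smul (hures hsub) (r := 1)
      (hpqr := ⟨by simpa only [one_div, inv_one] using h1pq.symm⟩)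
    rw [memLp_one_iff_integrable] at hprod
    exact hprod.congr (Eventually.of_forall fun t => by simp [smul_eq_mul])
  refine ⟨part1, ?_⟩
  -- Main estimate for y ≤ x
  have main : ∀ x y : ℝ, x ∈ Set.Icc a b → y ∈ Set.Icc a b → y ≤ x →
      |RLint a s u x - RLint a s u y| ≤
        2 * (Real.Gamma s)⁻¹ / (r + 1) ^ (1 / q) * N * (x - y) ^ (s - 1 / p) := by
    intro x y hx hy hyx
    have hay : a ≤ y := hy.1
    have hax : a ≤ x := hx.1
    have hxb : x ≤ b := hx.2
    have hsub1 : Set.Ioo y x ⊆ Set.Ioo a b := Set.Ioo_subset_Ioo hay hxb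
    have hsub2 : Set.Ioo a y ⊆ Set.Ioo a b := Set.Ioo_subset_Ioo le_rfl (hyx.trans hxb)
    have hxy0 : (0:ℝ) ≤ x - y := sub_nonneg.2 hyx
    have I1 : IntervalIntegrable (fun t => u t * (x - t) ^ (s - 1)) volume a x := part1 x hx
    have I1y : IntervalIntegrable (fun t => u t * (x - t) ^ (s - 1)) volume a y := by
      apply I1.mono_set
      rw [Set.uIcc_of_le hay, Set.uIcc_of_le hax]
      exact Set.Icc_subset_Icc le_rfl hyx
    have I1yx : IntervalIntegrable (fun t => u t * (x - t) ^ (s - 1)) volume y x := by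
      apply I1.mono_set
      rw [Set.uIcc_of_le hyx, Set.uIcc_of_le hax]
      exact Set.Icc_subset_Icc hay le_rfl
    have I2 : IntervalIntegrable (fun t => u t * (y - t) ^ (s - 1)) volume a y := part1 y hy
    have decomp : (∫ t in a..x, u t * (x - t) ^ (s - 1)) - ∫ t in a..y, u t * (y - t) ^ (s - 1)
        = (∫ t in y..x, u t * (x - t) ^ (s - 1))
          + ∫ t in a..y, (u t * (x - t) ^ (s - 1) - u t * (y - t) ^ (s - 1)) := by
      rw [intervalIntegral.integral_sub I1y I2,
        ← intervalIntegral.integral_add_adjacent_intervals I1y I1yx]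
      ring
    -- Term 1
    have T1 : |∫ t in y..x, u t * (x - t) ^ (s - 1)|
        ≤ N * ((x - y) ^ (r + 1) / (r + 1)) ^ (1 / q) := by
      have hval : ∫ t in Set.Ioo y x, ((x - t) ^ (s - 1)) ^ q
          = (x - y) ^ (r + 1) / (r + 1) := by
        have he : ∫ t in Set.Ioo y x, ((x - t) ^ (s - 1)) ^ q
            = ∫ t in Set.Ioo y x, (x - t) ^ r :=
          setIntegral_congr_fun measurableSet_Ioo (fun t ht => by
            simp only [hrdef]
            rw [Real.rpow_mul (by linarith [ht.2] : (0:ℝ) ≤ x - t)])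
        rw [he, ← integral_Ioc_eq_integral_Ioo, ← intervalIntegral.integral_of_le hyx,
          kerval y x x, sub_self, Real.zero_rpow (by linarith), sub_zero]
      have hintq : Integrable (fun t => ((x - t) ^ (s - 1)) ^ q)
          (volume.restrict (Set.Ioo y x)) := by
        refine (kerres y x x hyx).congr
          (ae_restrict_of_forall_mem measurableSet_Ioo fun t ht => ?_)
        simp only [hrdef]
        rw [Real.rpow_mul (by linarith [ht.2] : (0:ℝ) ≤ x - t)]
      have hgm : AEStronglyMeasurable (fun t : ℝ => (x - t) ^ (s - 1))
          (volume.restrict (Set.Ioo y x)) :=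
        ((measurable_const.sub measurable_id).pow_const _).aestronglyMeasurable
      have hgnn : ∀ t ∈ Set.Ioo y x, 0 ≤ (x - t) ^ (s - 1) :=
        fun t ht => Real.rpow_nonneg (by linarith [ht.2]) _
      have step0 : |∫ t in y..x, u t * (x - t) ^ (s - 1)|
          ≤ ∫ t in Set.Ioo y x, |u t| * (x - t) ^ (s - 1) := by
        rw [intervalIntegral.integral_of_le hyx, integral_Ioc_eq_integral_Ioo]
        calc |∫ t in Set.Ioo y x, u t * (x - t) ^ (s - 1)|
            ≤ ∫ t in Set.Ioo y x, |u t * (x - t) ^ (s - 1)| := by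
              simpa only [Real.norm_eq_abs] using
                norm_integral_le_integral_norm (μ := volume.restrict (Set.Ioo y x))
                  (f := fun t => u t * (x - t) ^ (s - 1))
          _ = ∫ t in Set.Ioo y x, |u t| * (x - t) ^ (s - 1) :=
              setIntegral_congr_fun measurableSet_Ioo (fun t ht => by
                show |u t * (x - t) ^ (s - 1)| = |u t| * (x - t) ^ (s - 1)
                rw [abs_mul, abs_of_nonneg (hgnn t ht)])
      calc |∫ t in y..x, u t * (x - t) ^ (s - 1)|
          ≤ ∫ t in Set.Ioo y x, |u t| * (x - t) ^ (s - 1) := step0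
        _ ≤ N * (∫ t in Set.Ioo y x, ((x - t) ^ (s - 1)) ^ q) ^ (1 / q) :=
            holder y x hsub1 _ hgm hgnn hintq
        _ = N * ((x - y) ^ (r + 1) / (r + 1)) ^ (1 / q) := by rw [hval]
    -- Term 2
    have T2 : |∫ t in a..y, (u t * (x - t) ^ (s - 1) - u t * (y - t) ^ (s - 1))|
        ≤ N * ((x - y) ^ (r + 1) / (r + 1)) ^ (1 / q) := by
      have hgm : AEStronglyMeasurable
          (fun t : ℝ => (y - t) ^ (s - 1) - (x - t) ^ (s - 1))
          (volume.restrict (Set.Ioo a y)) :=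
        (((measurable_const.sub measurable_id).pow_const _).sub
          ((measurable_const.sub measurable_id).pow_const _)).aestronglyMeasurable
      have hgnn : ∀ t ∈ Set.Ioo a y, 0 ≤ (y - t) ^ (s - 1) - (x - t) ^ (s - 1) := by
        intro t ht
        have h1 : (0:ℝ) < y - t := by linarith [ht.2]
        have h2 := Real.rpow_le_rpow_of_nonpos h1 (by linarith : y - t ≤ x - t)
          (by linarith : s - 1 ≤ 0)
        linarith
      have hbd : ∀ t ∈ Set.Ioo a y,
          ((y - t) ^ (s - 1) - (x - t) ^ (s - 1)) ^ q ≤ (y - t) ^ r - (x - t) ^ r := by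
        intro t ht
        have h1 : (0:ℝ) < y - t := by linarith [ht.2]
        have h2 : (0:ℝ) < x - t := by linarith [ht.2]
        have hAB : (x - t) ^ (s - 1) ≤ (y - t) ^ (s - 1) :=
          Real.rpow_le_rpow_of_nonpos h1 (by linarith) (by linarith)
        have h := rpow_sub_le_sub_rpow (Real.rpow_nonneg h2.le (s - 1)) hAB hq1
        rw [hrdef, Real.rpow_mul h1.le, Real.rpow_mul h2.le]
        exact h
      have hbig : Integrable (fun t => (y - t) ^ r - (x - t) ^ r)
          (volume.restrict (Set.Ioo a y)) := (kerres a y y hay).sub (kerres a y x hay)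
      have hintq : Integrable (fun t => ((y - t) ^ (s - 1) - (x - t) ^ (s - 1)) ^ q)
          (volume.restrict (Set.Ioo a y)) := by
        have hm2 : AEStronglyMeasurable
            (fun t : ℝ => ((y - t) ^ (s - 1) - (x - t) ^ (s - 1)) ^ q)
            (volume.restrict (Set.Ioo a y)) :=
          ((((measurable_const.sub measurable_id).pow_const _).sub
            ((measurable_const.sub measurable_id).pow_const _)).pow_const _).aestronglyMeasurable
        refine hbig.mono hm2 (ae_restrict_of_forall_mem measurableSet_Ioo fun t ht => ?_)
        simp only [Real.norm_eq_abs]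
        rw [abs_of_nonneg (Real.rpow_nonneg (hgnn t ht) q)]
        exact (hbd t ht).trans (le_abs_self _)
      have hqint_le : ∫ t in Set.Ioo a y, ((y - t) ^ (s - 1) - (x - t) ^ (s - 1)) ^ q
          ≤ (x - y) ^ (r + 1) / (r + 1) := by
        have step3 : (y - a) ^ (r + 1) ≤ (x - a) ^ (r + 1) :=
          Real.rpow_le_rpow (by linarith) (by linarith) (by linarith)
        calc ∫ t in Set.Ioo a y, ((y - t) ^ (s - 1) - (x - t) ^ (s - 1)) ^ q
            ≤ ∫ t in Set.Ioo a y, ((y - t) ^ r - (x - t) ^ r) :=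
              setIntegral_mono_on hintq hbig measurableSet_Ioo hbd
          _ = (y - a) ^ (r + 1) / (r + 1)
              - ((x - a) ^ (r + 1) - (x - y) ^ (r + 1)) / (r + 1) := by
              rw [← integral_Ioc_eq_integral_Ioo, ← intervalIntegral.integral_of_le hay,
                intervalIntegral.integral_sub (kerintble a y y) (kerintble a y x),
                kerval a y y, kerval a y x, sub_self, Real.zero_rpow (by linarith), sub_zero]
          _ ≤ (x - y) ^ (r + 1) / (r + 1) := by
              rw [div_sub_div_same]
              gcongr
              linarith
      have hqint_nonneg : 0 ≤ ∫ t in Set.Ioo a y,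
          ((y - t) ^ (s - 1) - (x - t) ^ (s - 1)) ^ q :=
        setIntegral_nonneg measurableSet_Ioo fun t ht => Real.rpow_nonneg (hgnn t ht) q
      have step0 : |∫ t in a..y, (u t * (x - t) ^ (s - 1) - u t * (y - t) ^ (s - 1))|
          ≤ ∫ t in Set.Ioo a y, |u t| * ((y - t) ^ (s - 1) - (x - t) ^ (s - 1)) := by
        rw [intervalIntegral.integral_of_le hay, integral_Ioc_eq_integral_Ioo]
        calc |∫ t in Set.Ioo a y, (u t * (x - t) ^ (s - 1) - u t * (y - t) ^ (s - 1))|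
            ≤ ∫ t in Set.Ioo a y, |u t * (x - t) ^ (s - 1) - u t * (y - t) ^ (s - 1)| := by
              simpa only [Real.norm_eq_abs] using
                norm_integral_le_integral_norm (μ := volume.restrict (Set.Ioo a y))
                  (f := fun t => u t * (x - t) ^ (s - 1) - u t * (y - t) ^ (s - 1))
          _ = ∫ t in Set.Ioo a y, |u t| * ((y - t) ^ (s - 1) - (x - t) ^ (s - 1)) :=
              setIntegral_congr_fun measurableSet_Ioo (fun t ht => by
                show |u t * (x - t) ^ (s - 1) - u t * (y - t) ^ (s - 1)|
                    = |u t| * ((y - t) ^ (s - 1) - (x - t) ^ (s - 1))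
                rw [← mul_sub, abs_mul, abs_sub_comm, abs_of_nonneg (hgnn t ht)])
      calc |∫ t in a..y, (u t * (x - t) ^ (s - 1) - u t * (y - t) ^ (s - 1))|
          ≤ ∫ t in Set.Ioo a y, |u t| * ((y - t) ^ (s - 1) - (x - t) ^ (s - 1)) := step0
        _ ≤ N * (∫ t in Set.Ioo a y, ((y - t) ^ (s - 1) - (x - t) ^ (s - 1)) ^ q) ^ (1 / q) :=
            holder a y hsub2 _ hgm hgnn hintq
        _ ≤ N * ((x - y) ^ (r + 1) / (r + 1)) ^ (1 / q) := by
            refine mul_le_mul_of_nonneg_left ?_ hNnonneg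
            exact Real.rpow_le_rpow hqint_nonneg hqint_le (by positivity)
    -- assemble
    have habs : |RLint a s u x - RLint a s u y|
        = (Real.Gamma s)⁻¹ * |(∫ t in a..x, u t * (x - t) ^ (s - 1))
            - ∫ t in a..y, u t * (y - t) ^ (s - 1)| := by
      rw [RLint, RLint, ← mul_sub, abs_mul, abs_of_pos (by positivity : (0:ℝ) < (Real.Gamma s)⁻¹)]
    rw [habs, decomp]
    have hsum : |(∫ t in y..x, u t * (x - t) ^ (s - 1))
          + ∫ t in a..y, (u t * (x - t) ^ (s - 1) - u t * (y - t) ^ (s - 1))|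
        ≤ 2 * (N * ((x - y) ^ (r + 1) / (r + 1)) ^ (1 / q)) := by
      have := abs_add_le (∫ t in y..x, u t * (x - t) ^ (s - 1))
        (∫ t in a..y, (u t * (x - t) ^ (s - 1) - u t * (y - t) ^ (s - 1)))
      linarith
    have hrw : ((x - y) ^ (r + 1) / (r + 1)) ^ (1 / q)
        = (x - y) ^ (s - 1 / p) / (r + 1) ^ (1 / q) := by
      rw [Real.div_rpow (Real.rpow_nonneg hxy0 _) hr1.le, ← Real.rpow_mul hxy0, hexp]
    calc (Real.Gamma s)⁻¹ * |(∫ t in y..x, u t * (x - t) ^ (s - 1))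
          + ∫ t in a..y, (u t * (x - t) ^ (s - 1) - u t * (y - t) ^ (s - 1))|
        ≤ (Real.Gamma s)⁻¹ * (2 * (N * ((x - y) ^ (r + 1) / (r + 1)) ^ (1 / q))) :=
          mul_le_mul_of_nonneg_left hsum (by positivity)
      _ = 2 * (Real.Gamma s)⁻¹ / (r + 1) ^ (1 / q) * N * (x - y) ^ (s - 1 / p) := by
          rw [hrw]
          field_simp
  -- conclusion
  intro x hx y hy
  rcases le_total y x with h | h
  · rw [hNtoReal, abs_of_nonneg (sub_nonneg.2 h)]
    exact main x y hx hy h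
  · rw [hNtoReal, abs_sub_comm (RLint a s u x), abs_sub_comm x,
      abs_of_nonneg (sub_nonneg.2 h)]
    exact main y x hy hx h
end

section
/- Let a < b be real numbers and s ∈ (0,1). Then for every u ∈ L^∞(a,b) the integral defining I_{a+}^s[u](x) converges absolutely for every x ∈ [a,b], and there exists a constant C > 0, depending only on s, such that |I_{a+}^s[u](x) − I_{a+}^s[u](y)| ≤ C ‖u‖_{L^∞(a,b)} |x−y|^{s} for all x, y ∈ [a,b]; in particular I_{a+}^s[u] is Hölder continuous of exponent s on [a,b]. -/
open MeasureTheory Set Filter ENNReal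

lemma kernel_intble {s : ℝ} (hs : -1 < s - 1) (x c d : ℝ) :
    IntervalIntegrable (fun t => (x - t) ^ (s - 1)) volume c d := by
  have := ((intervalIntegral.intervalIntegrable_rpow'
      (a := x - d) (b := x - c) hs).comp_sub_left x).symm
  simpa using this

lemma kernel_int {s : ℝ} (hs0 : 0 < s) (x c d : ℝ) :
    ∫ t in c..d, (x - t) ^ (s - 1) = ((x - c) ^ s - (x - d) ^ s) / s := by
  rw [intervalIntegral.integral_comp_sub_left (fun t => t ^ (s - 1)) x,
    integral_rpow (Or.inl (by linarith))]
  norm_num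

/-- the fractional integral maps `L^∞(a,b)` into the Hölder class of
exponent `s`, with a constant depending only on `s`. -/
theorem rl_fracint_holder_of_Linfty (s : ℝ) (hs : s ∈ Set.Ioo (0:ℝ) 1) :
    ∃ C > (0:ℝ), ∀ a b : ℝ, a < b → ∀ u : ℝ → ℝ,
      MemLp u ⊤ (volume.restrict (Set.Ioo a b)) →
        (∀ x ∈ Set.Icc a b,
          IntervalIntegrable (fun t => u t * (x - t) ^ (s - 1)) volume a x) ∧
        (∀ x ∈ Set.Icc a b, ∀ y ∈ Set.Icc a b,
          |RLint a s u x - RLint a s u y| ≤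
            C * (eLpNorm u ⊤ (volume.restrict (Set.Ioo a b))).toReal * |x - y| ^ s) := by
  obtain ⟨hs0, hs1⟩ := hs
  have hs' : -1 < s - 1 := by linarith
  have hΓ : 0 < Real.Gamma s := Real.Gamma_pos_of_pos hs0
  refine ⟨2 / (s * Real.Gamma s), by positivity, ?_⟩
  intro a b hab u hu
  set μ := volume.restrict (Set.Ioo a b) with hμ
  set M := (eLpNorm u ⊤ μ).toReal with hM
  have hM0 : 0 ≤ M := ENNReal.toReal_nonneg
  -- a.e. bound
  have hbd : ∀ᵐ t ∂μ, |u t| ≤ M := by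
    have h1 := enorm_ae_le_eLpNormEssSup u μ
    filter_upwards [h1] with t ht
    have : ((‖u t‖₊ : ℝ≥0∞)).toReal ≤ (eLpNormEssSup u μ).toReal := by
      refine ENNReal.toReal_mono ?_ ht
      rw [← eLpNorm_exponent_top]
      exact hu.2.ne
    simpa [hM, eLpNorm_exponent_top] using this
  have hIooIoc : volume.restrict (Set.Ioo a b) = volume.restrict (Set.Ioc a b) :=
    Measure.restrict_congr_set Ioo_ae_eq_Ioc
  have hbdIoc : ∀ᵐ t ∂(volume.restrict (Set.Ioc a b)), |u t| ≤ M := by rwa [← hIooIoc]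
  -- boundedness on subintervals of Ioc a b
  have hbdsub : ∀ S : Set ℝ, S ⊆ Set.Ioc a b → ∀ᵐ t ∂(volume.restrict S), |u t| ≤ M :=
    fun S hS => ae_restrict_of_ae_restrict_of_subset hS hbdIoc
  -- integrability
  have hInt : ∀ x ∈ Set.Icc a b,
      IntervalIntegrable (fun t => u t * (x - t) ^ (s - 1)) volume a x := by
    intro x hx
    rw [intervalIntegrable_iff_integrableOn_Ioo_of_le hx.1]
    have hmeas : AEStronglyMeasurable u (volume.restrict (Set.Ioo a x)) :=
      hu.1.mono_measure (Measure.restrict_mono (Set.Ioo_subset_Ioo_right hx.2) le_rfl)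
    have hk : Measurable (fun t : ℝ => (x - t) ^ (s - 1)) := by fun_prop
    refine Integrable.mono' (g := fun t => M * (x - t) ^ (s - 1)) ?_ (hmeas.mul hk.aestronglyMeasurable) ?_
    · exact (((kernel_intble hs' x a x).const_mul M).mono_set
        (by rw [Set.uIcc_of_le hx.1])).1.mono_set Set.Ioo_subset_Ioc_self
    · filter_upwards [hbdsub (Set.Ioo a x) (fun t ht =>
        ⟨ht.1, le_trans ht.2.le hx.2⟩), self_mem_ae_restrict measurableSet_Ioo] with t htM ht
      have hxt : (0:ℝ) ≤ x - t := by linarith [ht.2]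
      have hk0 : (0:ℝ) ≤ (x - t) ^ (s - 1) := Real.rpow_nonneg hxt _
      rw [Real.norm_eq_abs, abs_mul, abs_of_nonneg hk0]
      exact mul_le_mul_of_nonneg_right htM hk0
  refine ⟨hInt, ?_⟩
  -- the main estimate, first for y ≤ x
  have key : ∀ x ∈ Set.Icc a b, ∀ y ∈ Set.Icc a b, y ≤ x →
      |RLint a s u x - RLint a s u y| ≤
        2 / (s * Real.Gamma s) * M * (x - y) ^ s := by
    intro x hx y hy hyx
    have hay : a ≤ y := hy.1
    have hax : a ≤ x := hx.1
    -- integrability facts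
    have hx' := hInt x hx
    have hy' := hInt y hy
    have hxay : IntervalIntegrable (fun t => u t * (x - t) ^ (s - 1)) volume a y := by
      refine hx'.mono_set ?_
      rw [Set.uIcc_of_le hay, Set.uIcc_of_le hax]
      exact Set.Icc_subset_Icc le_rfl hyx
    have hxyx : IntervalIntegrable (fun t => u t * (x - t) ^ (s - 1)) volume y x := by
      refine hx'.mono_set ?_
      rw [Set.uIcc_of_le hyx, Set.uIcc_of_le hax]
      exact Set.Icc_subset_Icc hay le_rfl
    -- decomposition
    have hsplit : (∫ t in a..x, u t * (x - t) ^ (s - 1)) -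
        (∫ t in a..y, u t * (y - t) ^ (s - 1)) =
        (∫ t in a..y, u t * ((x - t) ^ (s - 1) - (y - t) ^ (s - 1))) +
        ∫ t in y..x, u t * (x - t) ^ (s - 1) := by
      rw [← intervalIntegral.integral_add_adjacent_intervals hxay hxyx]
      have : (∫ t in a..y, u t * ((x - t) ^ (s - 1) - (y - t) ^ (s - 1))) =
          (∫ t in a..y, u t * (x - t) ^ (s - 1)) - ∫ t in a..y, u t * (y - t) ^ (s - 1) := by
        rw [← intervalIntegral.integral_sub hxay hy']
        congr 1; funext t; ring
      rw [this]; ring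
    -- term 2 estimate
    have hterm2 : |∫ t in y..x, u t * (x - t) ^ (s - 1)| ≤ M * (x - y) ^ s / s := by
      have hg : IntervalIntegrable (fun t => M * (x - t) ^ (s - 1)) volume y x :=
        (kernel_intble hs' x y x).const_mul M
      have hb : ∀ᵐ t ∂(volume.restrict (Set.uIoc y x)),
          ‖u t * (x - t) ^ (s - 1)‖ ≤ M * (x - t) ^ (s - 1) := by
        rw [Set.uIoc_of_le hyx]
        filter_upwards [hbdsub (Set.Ioc y x) (fun t ht => ⟨lt_of_le_of_lt hay ht.1,
          le_trans ht.2 hx.2⟩), self_mem_ae_restrict measurableSet_Ioc] with t htM ht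
        have hxt : (0:ℝ) ≤ x - t := by linarith [ht.2]
        have hk0 : (0:ℝ) ≤ (x - t) ^ (s - 1) := Real.rpow_nonneg hxt _
        rw [Real.norm_eq_abs, abs_mul, abs_of_nonneg hk0]
        exact mul_le_mul_of_nonneg_right htM hk0
      have := intervalIntegral.norm_integral_le_abs_of_norm_le hb hg
      rw [Real.norm_eq_abs] at this
      refine this.trans ?_
      rw [intervalIntegral.integral_const_mul, kernel_int hs0]
      have h0 : (x - x) ^ s = 0 := by simp [Real.zero_rpow hs0.ne']
      rw [h0, sub_zero, abs_of_nonneg (mul_nonneg hM0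
        (div_nonneg (Real.rpow_nonneg (by linarith) s) hs0.le)), mul_div_assoc]
    -- term 1 estimate
    have hterm1 : |∫ t in a..y, u t * ((x - t) ^ (s - 1) - (y - t) ^ (s - 1))| ≤
        M * (x - y) ^ s / s := by
      have hg : IntervalIntegrable
          (fun t => M * ((y - t) ^ (s - 1) - (x - t) ^ (s - 1))) volume a y :=
        ((kernel_intble hs' y a y).sub (kernel_intble hs' x a y)).const_mul M
      have hney : ∀ᵐ t : ℝ ∂volume, t ≠ y := by
        refine compl_mem_ae_iff.2 ?_
        exact measure_mono_null (fun t (ht : t = y) => (ht : t ∈ ({y} : Set ℝ))) (measure_singleton y)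
      have hb : ∀ᵐ t ∂(volume.restrict (Set.uIoc a y)),
          ‖u t * ((x - t) ^ (s - 1) - (y - t) ^ (s - 1))‖ ≤
            M * ((y - t) ^ (s - 1) - (x - t) ^ (s - 1)) := by
        rw [Set.uIoc_of_le hay]
        filter_upwards [hbdsub (Set.Ioc a y) (fun t ht => ⟨ht.1, le_trans ht.2 hy.2⟩),
          self_mem_ae_restrict measurableSet_Ioc,
          ae_mono Measure.restrict_le_self hney] with t htM ht hty
        have hty' : t < y := lt_of_le_of_ne ht.2 hty
        have hyt : (0:ℝ) < y - t := by linarith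
        have hle : (x - t) ^ (s - 1) ≤ (y - t) ^ (s - 1) :=
          Real.rpow_le_rpow_of_nonpos hyt (by linarith) (by linarith)
        rw [Real.norm_eq_abs, abs_mul, abs_sub_comm ((x - t) ^ (s - 1)),
          abs_of_nonneg (sub_nonneg.2 hle)]
        exact mul_le_mul_of_nonneg_right htM (sub_nonneg.2 hle)
      have h1 := intervalIntegral.norm_integral_le_abs_of_norm_le hb hg
      rw [Real.norm_eq_abs] at h1
      refine h1.trans ?_
      have hval : (∫ t in a..y, M * ((y - t) ^ (s - 1) - (x - t) ^ (s - 1))) =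
          M * (((y - a) ^ s - (y - y) ^ s) / s - ((x - a) ^ s - (x - y) ^ s) / s) := by
        rw [intervalIntegral.integral_const_mul]
        congr 1
        rw [intervalIntegral.integral_sub (kernel_intble hs' y a y) (kernel_intble hs' x a y),
          kernel_int hs0, kernel_int hs0]
      -- the integral is nonnegative
      have hnn : 0 ≤ ∫ t in a..y, M * ((y - t) ^ (s - 1) - (x - t) ^ (s - 1)) := by
        refine intervalIntegral.integral_nonneg_of_ae_restrict (μ := volume) hay ?_
        have h2 := hb
        rw [Set.uIoc_of_le hay] at h2
        have hrc : volume.restrict (Set.Ioc a y) = volume.restrict (Set.Icc a y) :=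
          Measure.restrict_congr_set Ioc_ae_eq_Icc
        rw [hrc] at h2
        filter_upwards [h2] with t ht
        exact le_trans (norm_nonneg _) ht
      rw [abs_of_nonneg hnn, hval]
      have h0 : (y - y) ^ s = 0 := by simp [Real.zero_rpow hs0.ne']
      rw [h0, sub_zero]
      have hmono : (y - a) ^ s ≤ (x - a) ^ s :=
        Real.rpow_le_rpow (by linarith) (by linarith) hs0.le
      rw [mul_div_assoc]
      refine mul_le_mul_of_nonneg_left ?_ hM0
      rw [div_sub_div_same, div_le_div_iff_of_pos_right hs0]
      linarith
    -- combine
    have hfactor : RLint a s u x - RLint a s u y =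
        (Real.Gamma s)⁻¹ * ((∫ t in a..x, u t * (x - t) ^ (s - 1)) -
          ∫ t in a..y, u t * (y - t) ^ (s - 1)) := by
      simp only [RLint]; ring
    rw [hfactor, abs_mul, abs_of_nonneg (by positivity : (0:ℝ) ≤ (Real.Gamma s)⁻¹), hsplit]
    calc (Real.Gamma s)⁻¹ *
          |(∫ t in a..y, u t * ((x - t) ^ (s - 1) - (y - t) ^ (s - 1))) +
            ∫ t in y..x, u t * (x - t) ^ (s - 1)|
        ≤ (Real.Gamma s)⁻¹ * (M * (x - y) ^ s / s + M * (x - y) ^ s / s) := by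
          refine mul_le_mul_of_nonneg_left ?_ (by positivity)
          exact (abs_add_le _ _).trans (add_le_add hterm1 hterm2)
      _ = 2 / (s * Real.Gamma s) * M * (x - y) ^ s := by
          field_simp; ring
  intro x hx y hy
  rcases le_total y x with h | h
  · have := key x hx y hy h
    rwa [abs_of_nonneg (by linarith : (0:ℝ) ≤ x - y)]
  · have := key y hy x hx h
    rw [abs_sub_comm, abs_sub_comm x y]
    rwa [abs_of_nonneg (by linarith : (0:ℝ) ≤ y - x)]
end

section
/- Let a < b be real numbers, s ∈ (0,1) and f ∈ L^1(a,b). Then the following are equivalent: (i) there exists u ∈ L^1(a,b) such that f(x) = I_{a+}^s[u](x) for almost every x ∈ (a,b); (ii) there exists g ∈ L^1(a,b) such that I_{a+}^{1−s}[f](x) = ∫_a^x g(t) dt for almost every x ∈ (a,b) (that is, I_{a+}^{1−s}[f] belongs to W^{1,1}(a,b) and vanishes at a). Moreover, in this case u = g almost everywhere, i.e. the representing function u is the Riemann–Liouville derivative D_{a+}^s f. -/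
open MeasureTheory Set Filter ENNReal

lemma realBeta {p q : ℝ} (hp : 0 < p) (hq : 0 < q) :
    ∫ v in (0:ℝ)..1, v ^ (p - 1) * (1 - v) ^ (q - 1)
      = Real.Gamma p * Real.Gamma q / Real.Gamma (p + q) := by
  have key := Complex.Gamma_mul_Gamma_eq_betaIntegral (s := (p:ℂ)) (t := (q:ℂ))
    (by simpa using hp) (by simpa using hq)
  have hbeta : Complex.betaIntegral (p:ℂ) (q:ℂ)
      = ((∫ v in (0:ℝ)..1, v ^ (p - 1) * (1 - v) ^ (q - 1) : ℝ) : ℂ) := by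
    rw [Complex.betaIntegral, ← intervalIntegral.integral_ofReal]
    refine intervalIntegral.integral_congr fun v hv => ?_
    rw [uIcc_of_le (by norm_num : (0:ℝ) ≤ 1)] at hv
    have h1 : ((v:ℂ)) ^ ((p:ℂ) - 1) = ((v ^ (p - 1) : ℝ) : ℂ) := by
      rw [Complex.ofReal_cpow hv.1]; push_cast; ring_nf
    have h2 : ((1 - (v:ℂ))) ^ ((q:ℂ) - 1) = (((1 - v) ^ (q - 1) : ℝ) : ℂ) := by
      rw [show ((1:ℂ) - v) = (((1 - v : ℝ)):ℂ) by push_cast; ring,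
        Complex.ofReal_cpow (by linarith [hv.2])]
      push_cast; ring_nf
    rw [h1, h2]; push_cast; ring
  rw [hbeta, ← Complex.ofReal_add, Complex.Gamma_ofReal, Complex.Gamma_ofReal,
    Complex.Gamma_ofReal, ← Complex.ofReal_mul, ← Complex.ofReal_mul] at key
  have := Complex.ofReal_inj.mp key
  have hG : Real.Gamma (p + q) ≠ 0 := (Real.Gamma_pos_of_pos (by linarith)).ne'
  field_simp [this]
  linear_combination -this

lemma realBeta_intble {p q : ℝ} (hp : 0 < p) (hq : 0 < q) :
    IntervalIntegrable (fun v => v ^ (p - 1) * (1 - v) ^ (q - 1)) volume 0 1 := by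
  have hc := Complex.betaIntegral_convergent (u := (p:ℂ)) (v := (q:ℂ))
    (by simpa using hp) (by simpa using hq)
  rw [intervalIntegrable_iff_integrableOn_Ioo_of_le (by norm_num)] at hc ⊢
  refine IntegrableOn.congr_fun hc.re (fun v hv => ?_) measurableSet_Ioo
  have h1 : ((v:ℂ)) ^ ((p:ℂ) - 1) = ((v ^ (p - 1) : ℝ) : ℂ) := by
    rw [Complex.ofReal_cpow hv.1.le]; push_cast; ring_nf
  have h2 : ((1 - (v:ℂ))) ^ ((q:ℂ) - 1) = (((1 - v) ^ (q - 1) : ℝ) : ℂ) := by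
    rw [show ((1:ℂ) - v) = (((1 - v : ℝ)):ℂ) by push_cast; ring,
      Complex.ofReal_cpow (by linarith [hv.2])]
    push_cast; ring_nf
  simp only [RCLike.re_to_complex]
  rw [h1, h2, ← Complex.ofReal_mul, Complex.ofReal_re]

lemma kernel_intble_s5 {p q : ℝ} (hp : 0 < p) (hq : 0 < q) {r x : ℝ} (hrx : r < x) :
    IntegrableOn (fun t => (t - r) ^ (p - 1) * (x - t) ^ (q - 1)) (Ioo r x) := by
  set c := x - r with hc
  have hc0 : 0 < c := by simp only [hc]; linarith
  have h1 := (realBeta_intble hp hq).comp_mul_right (c := c⁻¹)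
  have h1' : IntervalIntegrable (fun t => (t * c⁻¹) ^ (p - 1) * (1 - t * c⁻¹) ^ (q - 1))
      volume 0 c := by simpa [hc0.ne'] using h1
  have h2 := h1'.comp_sub_right r
  have h3 : IntervalIntegrable (fun t => ((t - r) * c⁻¹) ^ (p - 1) * (1 - (t - r) * c⁻¹) ^ (q - 1))
      volume r x := by
    have hx : c + r = x := by simp [hc]
    simpa [hx] using h2
  rw [intervalIntegrable_iff_integrableOn_Ioo_of_le hrx.le] at h3
  have h4 : IntegrableOn
      (fun t => c ^ (p + q - 2) * (((t - r) * c⁻¹) ^ (p - 1) * (1 - (t - r) * c⁻¹) ^ (q - 1)))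
      (Ioo r x) := h3.const_mul _
  refine h4.congr_fun (fun t ht => ?_) measurableSet_Ioo
  obtain ⟨ht1, ht2⟩ := ht
  have htr : 0 < t - r := by linarith
  have hxt : 0 < x - t := by linarith
  have e1 : (1 : ℝ) - (t - r) * c⁻¹ = (x - t) * c⁻¹ := by field_simp; ring
  beta_reduce; rw [e1, Real.mul_rpow htr.le (by positivity), Real.mul_rpow hxt.le (by positivity),
    Real.inv_rpow hc0.le, Real.inv_rpow hc0.le, ← Real.rpow_neg hc0.le, ← Real.rpow_neg hc0.le]
  have hcc : c ^ (p + q - 2) * (c ^ (-(p - 1)) * c ^ (-(q - 1))) = 1 := by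
    rw [← Real.rpow_add hc0, ← Real.rpow_add hc0,
      show p + q - 2 + (-(p - 1) + -(q - 1)) = 0 by ring, Real.rpow_zero]
  linear_combination ((t - r) ^ (p - 1) * (x - t) ^ (q - 1)) * hcc

lemma kernel_integral {p q : ℝ} (hp : 0 < p) (hq : 0 < q) {r x : ℝ} (hrx : r < x) :
    ∫ t in Ioo r x, (t - r) ^ (p - 1) * (x - t) ^ (q - 1)
      = Real.Gamma p * Real.Gamma q / Real.Gamma (p + q) * (x - r) ^ (p + q - 1) := by
  set c := x - r with hc
  have hc0 : 0 < c := by simp only [hc]; linarith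
  rw [← integral_Ioc_eq_integral_Ioo, ← intervalIntegral.integral_of_le hrx.le]
  have hsub := intervalIntegral.integral_comp_mul_add
    (f := fun t => (t - r) ^ (p - 1) * (x - t) ^ (q - 1)) (hc0.ne') r (a := 0) (b := 1)
  simp only [mul_zero, zero_add, mul_one] at hsub
  have hx : c + r = x := by simp [hc]
  rw [hx] at hsub
  have key : ∫ t in r..x, (t - r) ^ (p - 1) * (x - t) ^ (q - 1)
      = c * ∫ v in (0:ℝ)..1, (c * v + r - r) ^ (p - 1) * (x - (c * v + r)) ^ (q - 1) := by
    rw [hsub, smul_eq_mul, ← mul_assoc, mul_inv_cancel₀ hc0.ne', one_mul]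
  rw [key]
  have hcong : ∫ v in (0:ℝ)..1, (c * v + r - r) ^ (p - 1) * (x - (c * v + r)) ^ (q - 1)
      = ∫ v in (0:ℝ)..1, c ^ (p + q - 2) * (v ^ (p - 1) * (1 - v) ^ (q - 1)) := by
    refine intervalIntegral.integral_congr fun v hv => ?_
    rw [uIcc_of_le (by norm_num : (0:ℝ) ≤ 1)] at hv
    have e1 : c * v + r - r = c * v := by ring
    have e2 : x - (c * v + r) = c * (1 - v) := by rw [← hx]; ring
    rw [e1, e2, Real.mul_rpow hc0.le hv.1, Real.mul_rpow hc0.le (by linarith [hv.2])]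
    have hcc : c ^ (p + q - 2) = c ^ (p - 1) * c ^ (q - 1) := by
      rw [← Real.rpow_add hc0]; ring_nf
    rw [hcc]; ring
  rw [hcong, intervalIntegral.integral_const_mul, realBeta hp hq, ← mul_assoc]
  rw [show c * c ^ (p + q - 2) = c ^ (p + q - 1) by
    nth_rewrite 1 [← Real.rpow_one c]; rw [← Real.rpow_add hc0]; ring_nf]
  ring

lemma measurable_rpow_const (c : ℝ) : Measurable fun x : ℝ => x ^ c := by
  have h : (fun x : ℝ => x ^ c) = fun x =>
      if x = 0 then (if c = 0 then 1 else 0)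
      else Real.exp (Real.log x * c) * (if 0 < x then 1 else Real.cos (c * Real.pi)) := by
    funext x
    rcases lt_trichotomy x 0 with h|h|h
    · rw [Real.rpow_def_of_neg h, if_neg h.ne, if_neg (not_lt.mpr h.le)]
      
    · subst h
      by_cases hc : c = 0
      · simp [hc]
      · simp [Real.zero_rpow hc, hc]
    · rw [Real.rpow_def_of_pos h, if_neg h.ne', if_pos h, mul_one]
  rw [h]
  refine Measurable.ite (measurableSet_eq_fun measurable_id measurable_const) measurable_const ?_
  refine ((Real.measurable_log.mul measurable_const).exp).mul ?_
  exact Measurable.ite (measurableSet_lt measurable_const measurable_id) measurable_const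
    measurable_const

lemma dirichlet {p q : ℝ} (hp : 0 < p) (hq : 0 < q) (he : 1 ≤ p + q) {a x : ℝ} (hax : a < x)
    {g : ℝ → ℝ} (hg : IntegrableOn g (Ioo a x)) :
    IntegrableOn (fun t => (∫ r in Ioo a t, g r * (t - r) ^ (p - 1)) * (x - t) ^ (q - 1))
        (Ioo a x) ∧
      ∫ t in Ioo a x, (∫ r in Ioo a t, g r * (t - r) ^ (p - 1)) * (x - t) ^ (q - 1)
        = Real.Gamma p * Real.Gamma q / Real.Gamma (p + q)
          * ∫ r in Ioo a x, g r * (x - r) ^ (p + q - 1) := by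
  set B := Real.Gamma p * Real.Gamma q / Real.Gamma (p + q) with hBdef
  have hB : 0 < B := div_pos (mul_pos (Real.Gamma_pos_of_pos hp) (Real.Gamma_pos_of_pos hq))
    (Real.Gamma_pos_of_pos (by linarith))
  set ρ := volume.restrict (Ioo a x) with hρ
  set F : ℝ × ℝ → ℝ := fun z =>
    Set.indicator {w : ℝ × ℝ | w.2 < w.1}
      (fun w => g w.2 * ((w.1 - w.2) ^ (p - 1) * (x - w.1) ^ (q - 1))) z with hFdef
  have hS : MeasurableSet {w : ℝ × ℝ | w.2 < w.1} :=
    measurableSet_lt measurable_snd measurable_fst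
  have hFm : AEStronglyMeasurable F (ρ.prod ρ) := by
    refine AEStronglyMeasurable.indicator ?_ hS
    exact (hg.aestronglyMeasurable.comp_snd).mul
      (((((measurable_rpow_const (p - 1)).comp (measurable_fst.sub measurable_snd)).mul
        ((measurable_rpow_const (q - 1)).comp
          (measurable_const.sub measurable_fst)))).aestronglyMeasurable)
  have hslice : ∀ r t, F (t, r)
      = (Ioi r).indicator (fun t => g r * ((t - r) ^ (p - 1) * (x - t) ^ (q - 1))) t := by
    intro r t
    simp only [hFdef]
    by_cases h : r < t
    · rw [Set.indicator_of_mem (by exact h : (t, r) ∈ {w : ℝ × ℝ | w.2 < w.1}),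
        Set.indicator_of_mem (by exact h)]
    · rw [Set.indicator_of_notMem (by exact h : ¬ (t, r) ∈ {w : ℝ × ℝ | w.2 < w.1}),
        Set.indicator_of_notMem (by exact h)]
  have hIoi : ∀ r ∈ Ioo a x, Ioi r ∩ Ioo a x = Ioo r x := by
    intro r hr
    ext t
    simp only [mem_inter_iff, mem_Ioi, mem_Ioo]
    exact ⟨fun ⟨h1, _, h3⟩ => ⟨h1, h3⟩, fun ⟨h1, h2⟩ => ⟨h1, hr.1.trans h1, h2⟩⟩
  have hker : ∀ r ∈ Ioo a x,
      IntegrableOn (fun t => g r * ((t - r) ^ (p - 1) * (x - t) ^ (q - 1))) (Ioo r x) := by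
    intro r hr
    exact (kernel_intble_s5 hp hq hr.2).const_mul (g r)
  have hsliceInt : ∀ r ∈ Ioo a x, Integrable (fun t => F (t, r)) ρ := by
    intro r hr
    simp only [hslice r]
    rw [integrable_indicator_iff measurableSet_Ioi, IntegrableOn, hρ,
      Measure.restrict_restrict measurableSet_Ioi, hIoi r hr]
    exact hker r hr
  have hsliceNorm : ∀ r ∈ Ioo a x,
      ∫ t, ‖F (t, r)‖ ∂ρ = |g r| * (B * (x - r) ^ (p + q - 1)) := by
    intro r hr
    simp only [hslice r, norm_indicator_eq_indicator_norm]
    rw [integral_indicator measurableSet_Ioi, hρ,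
      Measure.restrict_restrict measurableSet_Ioi, hIoi r hr]
    have : ∀ t ∈ Ioo r x, ‖g r * ((t - r) ^ (p - 1) * (x - t) ^ (q - 1))‖
        = |g r| * ((t - r) ^ (p - 1) * (x - t) ^ (q - 1)) := by
      intro t ht
      have h1 : (0:ℝ) < t - r := by linarith [ht.1]
      have h2 : (0:ℝ) < x - t := by linarith [ht.2]
      have hk : (0:ℝ) ≤ (t - r) ^ (p - 1) * (x - t) ^ (q - 1) := by positivity
      rw [norm_mul, Real.norm_eq_abs, Real.norm_eq_abs, abs_of_nonneg hk]
    rw [setIntegral_congr_fun measurableSet_Ioo this, integral_const_mul,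
      kernel_integral hp hq hr.2]
  have hnormInt : Integrable (fun r => ∫ t, ‖F (t, r)‖ ∂ρ) ρ := by
    refine Integrable.mono' ((hg.norm.const_mul (B * (x - a) ^ (p + q - 1))))
      hFm.norm.prod_swap.integral_prod_right' ?_
    rw [hρ]
    refine (ae_restrict_iff' measurableSet_Ioo).2 (ae_of_all _ fun r hr => ?_)
    rw [← hρ, hsliceNorm r hr]
    have h1 : (0:ℝ) ≤ x - r := by linarith [hr.2]
    have h2 : x - r ≤ x - a := by linarith [hr.1]
    have h3 : (x - r) ^ (p + q - 1) ≤ (x - a) ^ (p + q - 1) :=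
      Real.rpow_le_rpow h1 h2 (by linarith)
    have h4 : (0:ℝ) ≤ (x - r) ^ (p + q - 1) := Real.rpow_nonneg h1 _
    rw [Real.norm_eq_abs, abs_of_nonneg (by positivity), Real.norm_eq_abs]
    have h0 := abs_nonneg (g r)
    have h5 : |g r| * (B * (x - r) ^ (p + q - 1)) ≤ |g r| * (B * (x - a) ^ (p + q - 1)) :=
      mul_le_mul_of_nonneg_left (mul_le_mul_of_nonneg_left h3 hB.le) h0
    linarith
  have hF : Integrable F (ρ.prod ρ) := by
    refine (integrable_prod_iff' hFm).2 ⟨?_, hnormInt⟩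
    rw [hρ]
    exact (ae_restrict_iff' measurableSet_Ioo).2 (ae_of_all _ fun r hr => by
      rw [← hρ]; exact hsliceInt r hr)
  have hInner_t : ∀ t ∈ Ioo a x, ∫ r, F (t, r) ∂ρ
      = (∫ r in Ioo a t, g r * (t - r) ^ (p - 1)) * (x - t) ^ (q - 1) := by
    intro t ht
    have hs2 : ∀ r, F (t, r)
        = (Iio t).indicator (fun r => g r * (t - r) ^ (p - 1) * (x - t) ^ (q - 1)) r := by
      intro r
      simp only [hFdef]
      by_cases h : r < t
      · rw [Set.indicator_of_mem (by exact h : (t, r) ∈ {w : ℝ × ℝ | w.2 < w.1}),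
          Set.indicator_of_mem (by exact h : r ∈ Iio t)]
        ring
      · rw [Set.indicator_of_notMem (by exact h : ¬ (t, r) ∈ {w : ℝ × ℝ | w.2 < w.1}),
          Set.indicator_of_notMem (by exact h : ¬ r ∈ Iio t)]
    simp only [hs2]
    rw [integral_indicator measurableSet_Iio, hρ,
      Measure.restrict_restrict measurableSet_Iio,
      show Iio t ∩ Ioo a x = Ioo a t by
        ext r
        simp only [mem_inter_iff, mem_Iio, mem_Ioo]
        exact ⟨fun ⟨h1, h2, _⟩ => ⟨h2, h1⟩, fun ⟨h1, h2⟩ => ⟨h2, h1, h2.trans ht.2⟩⟩,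
      integral_mul_const]
  have hInner_r : ∀ r ∈ Ioo a x, ∫ t, F (t, r) ∂ρ = g r * (B * (x - r) ^ (p + q - 1)) := by
    intro r hr
    simp only [hslice r]
    rw [integral_indicator measurableSet_Ioi, hρ,
      Measure.restrict_restrict measurableSet_Ioi, hIoi r hr, integral_const_mul,
      kernel_integral hp hq hr.2]
  have hswap : ∫ t, (∫ r, F (t, r) ∂ρ) ∂ρ = ∫ r, (∫ t, F (t, r) ∂ρ) ∂ρ :=
    integral_integral_swap (f := fun t r => F (t, r)) hF
  constructor
  · refine (hF.integral_prod_left).congr ?_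
    rw [hρ]
    refine (ae_restrict_iff' measurableSet_Ioo).2 (ae_of_all _ fun t ht => ?_)
    rw [← hρ]
    exact hInner_t t ht
  · calc ∫ t in Ioo a x, (∫ r in Ioo a t, g r * (t - r) ^ (p - 1)) * (x - t) ^ (q - 1)
        = ∫ t, (∫ r, F (t, r) ∂ρ) ∂ρ := by
          rw [hρ]
          exact (setIntegral_congr_fun measurableSet_Ioo
            (fun t ht => by rw [← hρ]; exact (hInner_t t ht).symm))
      _ = ∫ r, (∫ t, F (t, r) ∂ρ) ∂ρ := hswap
      _ = ∫ r in Ioo a x, g r * (B * (x - r) ^ (p + q - 1)) := by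
          rw [hρ]
          exact setIntegral_congr_fun measurableSet_Ioo
            (fun r hr => by rw [← hρ]; exact hInner_r r hr)
      _ = B * ∫ r in Ioo a x, g r * (x - r) ^ (p + q - 1) := by
          rw [← integral_const_mul]
          exact setIntegral_congr_fun measurableSet_Ioo (fun r hr => by ring)

lemma ae_eq_of_primitive_eq {a b : ℝ} (hab : a < b) {h₁ h₂ : ℝ → ℝ}
    (hi₁ : IntegrableOn h₁ (Ioo a b)) (hi₂ : IntegrableOn h₂ (Ioo a b))
    (h : ∀ᵐ x ∂(volume.restrict (Ioo a b)), ∫ t in Ioo a x, h₁ t = ∫ t in Ioo a x, h₂ t) :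
    h₁ =ᵐ[volume.restrict (Ioo a b)] h₂ := by
  set H : ℝ → ℝ := fun t => h₁ t - h₂ t with hHdef
  have hH : IntegrableOn H (Ioo a b) := hi₁.sub hi₂
  set H' : ℝ → ℝ := (Ioo a b).indicator H with hH'def
  have hH' : Integrable H' volume := by
    rw [hH'def, integrable_indicator_iff measurableSet_Ioo]; exact hH
  set G : ℝ → ℝ := fun x => ∫ t in a..x, H' t with hGdef
  have hGcont : Continuous G :=
    intervalIntegral.continuous_primitive (fun c d => hH'.intervalIntegrable) a
  have hGx : ∀ x, a < x → x ≤ b → G x = ∫ t in Ioo a x, H t := by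
    intro x h1 h2
    rw [hGdef]
    simp only
    rw [intervalIntegral.integral_of_le h1.le, integral_Ioc_eq_integral_Ioo]
    refine setIntegral_congr_fun measurableSet_Ioo fun t ht => ?_
    have : t ∈ Ioo a b := ⟨ht.1, lt_of_lt_of_le ht.2 h2⟩
    rw [hH'def]; exact Set.indicator_of_mem this H
  have hae : ∀ᵐ x ∂(volume.restrict (Ioo a b)), G x = 0 := by
    filter_upwards [h, (ae_restrict_iff' measurableSet_Ioo).2
      (ae_of_all _ fun x (hx : x ∈ Ioo a b) => hx)] with x hx hmem
    rw [hGx x hmem.1 hmem.2.le, hHdef]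
    have e1 : IntegrableOn h₁ (Ioo a x) := hi₁.mono_set (Ioo_subset_Ioo le_rfl hmem.2.le)
    have e2 : IntegrableOn h₂ (Ioo a x) := hi₂.mono_set (Ioo_subset_Ioo le_rfl hmem.2.le)
    rw [integral_sub e1 e2, hx, sub_self]
  have hG0 : ∀ x ∈ Ioo a b, G x = 0 := by
    by_contra hc
    push_neg at hc
    obtain ⟨x₀, hx₀, hGx₀⟩ := hc
    have hU : IsOpen {x | x ∈ Ioo a b ∧ G x ≠ 0} := by
      have : {x | x ∈ Ioo a b ∧ G x ≠ 0} = Ioo a b ∩ G ⁻¹' ({0}ᶜ) := rfl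
      rw [this]
      exact isOpen_Ioo.inter (isOpen_compl_singleton.preimage hGcont)
    have hpos : 0 < volume {x | x ∈ Ioo a b ∧ G x ≠ 0} :=
      hU.measure_pos volume ⟨x₀, hx₀, hGx₀⟩
    have hzero : volume {x | x ∈ Ioo a b ∧ G x ≠ 0} = 0 := by
      rw [ae_restrict_iff' measurableSet_Ioo] at hae
      rw [ae_iff] at hae
      convert hae using 2
      ext x
      simp only [Set.mem_setOf_eq, ne_eq]
      tauto
    exact absurd hzero hpos.ne'
  have hGb : G b = 0 := by
    have h1 : Tendsto G (nhdsWithin b (Iio b)) (nhds (G b)) :=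
      (hGcont.continuousAt).continuousWithinAt
    have h2 : G =ᶠ[nhdsWithin b (Iio b)] fun _ => 0 := by
      filter_upwards [Ioo_mem_nhdsLT_of_mem (⟨hab, le_refl b⟩ : b ∈ Ioc a b)] with x hx
      exact hG0 x hx
    have h3 : Tendsto G (nhdsWithin b (Iio b)) (nhds 0) :=
      Tendsto.congr' h2.symm tendsto_const_nhds
    exact tendsto_nhds_unique h1 h3
  -- now the measure argument
  set ρ := volume.restrict (Ioo a b) with hρ
  set μ := ρ.withDensity (fun t => ENNReal.ofReal (H t)) with hμ
  set ν := ρ.withDensity (fun t => ENNReal.ofReal (-H t)) with hν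
  have hHm : AEMeasurable H ρ := hH.aestronglyMeasurable.aemeasurable
  have hfin₁ : IsFiniteMeasure μ := by
    constructor
    rw [hμ, withDensity_apply _ MeasurableSet.univ, Measure.restrict_univ]
    exact hH.lintegral_lt_top
  have hfin₂ : IsFiniteMeasure ν := by
    constructor
    rw [hν, withDensity_apply _ MeasurableSet.univ, Measure.restrict_univ]
    exact hH.neg.lintegral_lt_top
  have hSsub : ∀ x : ℝ, Iic x ∩ Ioo a b ⊆ Ioo a b := fun x => inter_subset_right
  have hSint : ∀ x : ℝ, IntegrableOn H (Iic x ∩ Ioo a b) := fun x => hH.mono_set (hSsub x)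
  have hSzero : ∀ x : ℝ, ∫ t in Iic x ∩ Ioo a b, H t = 0 := by
    intro x
    rcases le_or_gt x a with hxa | hax
    · have : Iic x ∩ Ioo a b = (∅ : Set ℝ) := by
        ext t; simp only [mem_inter_iff, mem_Iic, mem_Ioo, mem_empty_iff_false, iff_false]
        rintro ⟨ht1, ht2, _⟩; linarith
      rw [this]; simp
    · rcases lt_or_ge x b with hxb | hbx
      · have hset : Iic x ∩ Ioo a b = Ioc a x := by
          ext t; simp only [mem_inter_iff, mem_Iic, mem_Ioo, mem_Ioc]
          exact ⟨fun ⟨u1, u2, _⟩ => ⟨u2, u1⟩, fun ⟨u1, u2⟩ => ⟨u2, u1, lt_of_le_of_lt u2 hxb⟩⟩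
        rw [hset, integral_Ioc_eq_integral_Ioo, ← hGx x hax hxb.le]
        exact hG0 x ⟨hax, hxb⟩
      · have hset : Iic x ∩ Ioo a b = Ioo a b := by
          ext t; simp only [mem_inter_iff, mem_Iic, mem_Ioo]
          exact ⟨fun u => u.2, fun u => ⟨u.2.le.trans hbx, u⟩⟩
        rw [hset, ← hGb, hGx b hab le_rfl]
  have hIic : ∀ x : ℝ, μ (Iic x) = ν (Iic x) := by
    intro x
    rw [hμ, hν, withDensity_apply _ measurableSet_Iic, withDensity_apply _ measurableSet_Iic,
      hρ, Measure.restrict_restrict measurableSet_Iic]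
    set S := Iic x ∩ Ioo a b with hSdef
    have hpos : Integrable (fun t => max (H t) 0) (volume.restrict S) := (hSint x).pos_part
    have hneg : Integrable (fun t => max (-H t) 0) (volume.restrict S) := (hSint x).neg.pos_part
    have e1 : ∫⁻ t in S, ENNReal.ofReal (H t) = ENNReal.ofReal (∫ t in S, max (H t) 0) := by
      rw [ofReal_integral_eq_lintegral_ofReal hpos (ae_of_all _ fun t => le_max_right _ _)]
      exact lintegral_congr fun t => by
        rcases le_or_gt (H t) 0 with h | h
        · rw [max_eq_right h, ENNReal.ofReal_eq_zero.2 h]; simp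
        · rw [max_eq_left h.le]
    have e2 : ∫⁻ t in S, ENNReal.ofReal (-H t) = ENNReal.ofReal (∫ t in S, max (-H t) 0) := by
      rw [ofReal_integral_eq_lintegral_ofReal hneg (ae_of_all _ fun t => le_max_right _ _)]
      exact lintegral_congr fun t => by
        rcases le_or_gt (-H t) 0 with h | h
        · rw [max_eq_right h, ENNReal.ofReal_eq_zero.2 h]; simp
        · rw [max_eq_left h.le]
    rw [e1, e2]
    congr 1
    have e3 : ∫ t in S, (max (H t) 0 - max (-H t) 0) = 0 := by
      have : ∀ t, max (H t) 0 - max (-H t) 0 = H t := by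
        intro t
        rcases le_or_gt (H t) 0 with h | h
        · rw [max_eq_right h, max_eq_left (by linarith)]; ring
        · rw [max_eq_left h.le, max_eq_right (by linarith)]; ring
      simp_rw [this]
      exact hSzero x
    rw [integral_sub hpos hneg] at e3
    linarith
  have hμν : μ = ν := Measure.ext_of_Iic μ ν hIic
  have hkey : (fun t => ENNReal.ofReal (H t)) =ᵐ[ρ] (fun t => ENNReal.ofReal (-H t)) := by
    exact (withDensity_eq_iff_of_sigmaFinite hHm.ennreal_ofReal hHm.neg.ennreal_ofReal).1 hμν
  rw [hρ] at hkey
  filter_upwards [hkey] with t ht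
  have : H t = 0 := by
    by_contra hne
    rcases lt_or_gt_of_ne hne with hlt | hgt
    · have l1 : ENNReal.ofReal (H t) = 0 := ENNReal.ofReal_eq_zero.2 hlt.le
      have l2 : 0 < ENNReal.ofReal (-H t) := ENNReal.ofReal_pos.2 (by linarith)
      rw [ht] at l1; exact absurd l1 l2.ne'
    · have l1 : ENNReal.ofReal (-H t) = 0 := ENNReal.ofReal_eq_zero.2 (by linarith)
      have l2 : 0 < ENNReal.ofReal (H t) := ENNReal.ofReal_pos.2 hgt
      rw [← ht] at l1; exact absurd l1 l2.ne'
  have := this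
  rw [hHdef] at this
  exact sub_eq_zero.mp this

lemma RLint_eq (a σ : ℝ) (u : ℝ → ℝ) {x : ℝ} (hax : a < x) :
    RLint a σ u x = (Real.Gamma σ)⁻¹ * ∫ t in Ioo a x, u t * (x - t) ^ (σ - 1) := by
  rw [RLint, intervalIntegral.integral_of_le hax.le, integral_Ioc_eq_integral_Ioo]

lemma forward_calc {a b s : ℝ} (hs1 : 0 < s) (hs2 : s < 1)
    {f u : ℝ → ℝ} (hu : IntegrableOn u (Ioo a b))
    (hfu : ∀ᵐ x ∂(volume.restrict (Ioo a b)), f x = RLint a s u x) :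
    ∀ x ∈ Ioo a b, RLint a (1 - s) f x = ∫ t in Ioo a x, u t := by
  have h1s : 0 < 1 - s := by linarith
  have hΓs := Real.Gamma_pos_of_pos hs1
  have hΓ1s := Real.Gamma_pos_of_pos h1s
  intro x hx
  have hsub : Ioo a x ⊆ Ioo a b := Ioo_subset_Ioo le_rfl hx.2.le
  rw [RLint_eq a (1 - s) f hx.1]
  have hae : ∀ᵐ t ∂(volume.restrict (Ioo a x)),
      f t * (x - t) ^ (1 - s - 1)
        = (Real.Gamma s)⁻¹
          * ((∫ r in Ioo a t, u r * (t - r) ^ (s - 1)) * (x - t) ^ (1 - s - 1)) := by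
    filter_upwards [ae_restrict_of_ae_restrict_of_subset hsub hfu,
      (ae_restrict_iff' measurableSet_Ioo).2 (ae_of_all _ fun t (ht : t ∈ Ioo a x) => ht)]
      with t h1 h2
    rw [h1, RLint_eq a s u h2.1]; ring
  rw [integral_congr_ae hae, integral_const_mul,
    (dirichlet hs1 h1s (by linarith) hx.1 (hu.mono_set hsub)).2,
    show s + (1 - s) = 1 by ring, Real.Gamma_one, show (1:ℝ) - 1 = 0 by norm_num]
  simp only [Real.rpow_zero, mul_one, div_one]
  field_simp

lemma backward_calc {a b s : ℝ} (hs1 : 0 < s) (hs2 : s < 1)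
    {f g : ℝ → ℝ} (hf : IntegrableOn f (Ioo a b)) (hg : IntegrableOn g (Ioo a b))
    (hfg : ∀ᵐ x ∂(volume.restrict (Ioo a b)), RLint a (1 - s) f x = ∫ t in a..x, g t) :
    ∀ x ∈ Ioo a b, ∫ t in Ioo a x, f t
      = ∫ t in Ioo a x, (Real.Gamma s)⁻¹ * ∫ r in Ioo a t, g r * (t - r) ^ (s - 1) := by
  have h1s : 0 < 1 - s := by linarith
  have hΓs := Real.Gamma_pos_of_pos hs1
  have hΓ1s := Real.Gamma_pos_of_pos h1s
  have hΓs1 := Real.Gamma_pos_of_pos (show (0:ℝ) < s + 1 by linarith)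
  intro x hx
  have hsub : Ioo a x ⊆ Ioo a b := Ioo_subset_Ioo le_rfl hx.2.le
  have hfx : IntegrableOn f (Ioo a x) := hf.mono_set hsub
  have hgx : IntegrableOn g (Ioo a x) := hg.mono_set hsub
  set I := ∫ r in Ioo a x, g r * (x - r) ^ s with hI
  have hE1 := (dirichlet h1s hs1 (by linarith) hx.1 hfx).2
  rw [show 1 - s + s = 1 by ring, Real.Gamma_one, show (1:ℝ) - 1 = 0 by norm_num] at hE1
  simp only [Real.rpow_zero, mul_one, div_one] at hE1
  have hE2 := (dirichlet one_pos hs1 (by linarith) hx.1 hgx).2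
  rw [Real.Gamma_one, show (1:ℝ) - 1 = 0 by norm_num, show (1:ℝ) + s - 1 = s by ring,
    show (1:ℝ) + s = s + 1 by ring] at hE2
  simp only [Real.rpow_zero, mul_one, one_mul] at hE2
  have hE3 := (dirichlet hs1 one_pos (by linarith) hx.1 hgx).2
  rw [Real.Gamma_one, show (1:ℝ) - 1 = 0 by norm_num, show s + 1 - 1 = s by ring] at hE3
  simp only [Real.rpow_zero, mul_one] at hE3
  have hb1 : ∫ t in Ioo a x, RLint a (1 - s) f t * (x - t) ^ (s - 1)
      = (Real.Gamma (1 - s))⁻¹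
        * ∫ t in Ioo a x, (∫ r in Ioo a t, f r * (t - r) ^ (1 - s - 1)) * (x - t) ^ (s - 1) := by
    rw [← integral_const_mul]
    exact setIntegral_congr_fun measurableSet_Ioo fun t ht => by
      rw [RLint_eq a (1 - s) f ht.1]; ring
  have hb2 : ∫ t in Ioo a x, RLint a (1 - s) f t * (x - t) ^ (s - 1)
      = ∫ t in Ioo a x, (∫ r in Ioo a t, g r) * (x - t) ^ (s - 1) := by
    refine integral_congr_ae ?_
    filter_upwards [ae_restrict_of_ae_restrict_of_subset hsub hfg,
      (ae_restrict_iff' measurableSet_Ioo).2 (ae_of_all _ fun t (ht : t ∈ Ioo a x) => ht)]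
      with t h1 h2
    rw [h1, intervalIntegral.integral_of_le h2.1.le, integral_Ioc_eq_integral_Ioo]
  rw [hE1] at hb1
  rw [show Real.Gamma (1 - s) * Real.Gamma s * ∫ t in Ioo a x, f t
      = Real.Gamma (1 - s) * (Real.Gamma s * ∫ t in Ioo a x, f t) by ring,
    inv_mul_cancel_left₀ hΓ1s.ne'] at hb1
  have hkey : Real.Gamma s * ∫ t in Ioo a x, f t
      = Real.Gamma s / Real.Gamma (s + 1) * I := hb1.symm.trans (hb2.trans hE2)
  have hJ : ∫ t in Ioo a x, f t = (Real.Gamma (s + 1))⁻¹ * I := by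
    refine mul_left_cancel₀ hΓs.ne' ?_
    rw [hkey]
    field_simp
  rw [hJ, integral_const_mul, hE3]
  field_simp
  exact hI

/-- `f ∈ L^1(a,b)` is representable as `I_{a+}^s[u]` with `u ∈ L^1`
iff `I_{a+}^{1-s}[f]` is in `W^{1,1}(a,b)` and vanishes at `a`; moreover the
representing function is the Riemann–Liouville derivative. -/
theorem rl_L1_representability (a b s : ℝ) (hab : a < b) (hs : s ∈ Set.Ioo (0:ℝ) 1)
    (f : ℝ → ℝ) (hf : IntegrableOn f (Set.Ioo a b)) :
    ((∃ u : ℝ → ℝ, IntegrableOn u (Set.Ioo a b) ∧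
        ∀ᵐ x ∂(volume.restrict (Set.Ioo a b)), f x = RLint a s u x) ↔
      (∃ g : ℝ → ℝ, IntegrableOn g (Set.Ioo a b) ∧
        ∀ᵐ x ∂(volume.restrict (Set.Ioo a b)),
          RLint a (1 - s) f x = ∫ t in a..x, g t)) ∧
    (∀ u g : ℝ → ℝ, IntegrableOn u (Set.Ioo a b) → IntegrableOn g (Set.Ioo a b) →
      (∀ᵐ x ∂(volume.restrict (Set.Ioo a b)), f x = RLint a s u x) →
      (∀ᵐ x ∂(volume.restrict (Set.Ioo a b)), RLint a (1 - s) f x = ∫ t in a..x, g t) →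
      u =ᵐ[volume.restrict (Set.Ioo a b)] g) := by
  obtain ⟨hs1, hs2⟩ := hs
  have hmem : ∀ᵐ x ∂(volume.restrict (Ioo a b)), x ∈ Ioo a b :=
    (ae_restrict_iff' measurableSet_Ioo).2 (ae_of_all _ fun x hx => hx)
  constructor
  · constructor
    · rintro ⟨u, hu, hfu⟩
      refine ⟨u, hu, ?_⟩
      filter_upwards [hmem] with x hx
      rw [intervalIntegral.integral_of_le hx.1.le, integral_Ioc_eq_integral_Ioo]
      exact forward_calc hs1 hs2 hu hfu x hx
    · rintro ⟨g, hg, hfg⟩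
      refine ⟨g, hg, ?_⟩
      have base := (dirichlet hs1 one_pos (by linarith) hab hg).1
      have base2 : IntegrableOn (fun t => (Real.Gamma s)⁻¹
          * ((∫ r in Ioo a t, g r * (t - r) ^ (s - 1)) * (b - t) ^ ((1:ℝ) - 1)))
          (Ioo a b) := base.const_mul _
      have hu₀ : IntegrableOn
          (fun t => (Real.Gamma s)⁻¹ * ∫ r in Ioo a t, g r * (t - r) ^ (s - 1)) (Ioo a b) := by
        refine base2.congr_fun (fun t ht => ?_) measurableSet_Ioo
        beta_reduce; rw [show (1:ℝ) - 1 = 0 by norm_num, Real.rpow_zero, mul_one]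
      have haeq : f =ᵐ[volume.restrict (Ioo a b)]
          (fun t => (Real.Gamma s)⁻¹ * ∫ r in Ioo a t, g r * (t - r) ^ (s - 1)) :=
        ae_eq_of_primitive_eq hab hf hu₀ (by
          filter_upwards [hmem] with x hx
          exact backward_calc hs1 hs2 hf hg hfg x hx)
      filter_upwards [haeq, hmem] with x h1 h2
      rw [h1, RLint_eq a s g h2.1]
  · intro u g hu hg hfu hfg
    have hA := forward_calc hs1 hs2 hu hfu
    refine ae_eq_of_primitive_eq hab hu hg ?_
    filter_upwards [hfg, hmem] with x h1 h2
    rw [← hA x h2, h1, intervalIntegral.integral_of_le h2.1.le, integral_Ioc_eq_integral_Ioo]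
end

section
/- Let a < b be real numbers and s ∈ (0,1). Define W^{s,1}(a,b) as the set of u ∈ L^1(a,b) for which there exist c ∈ ℝ and g ∈ L^1(a,b) with I_{a+}^{1−s}[u](x) = c + ∫_a^x g(t) dt for almost every x ∈ (a,b), and for such u set ‖u‖_{W^{s,1}} := ‖u‖_{L^1(a,b)} + ‖I_{a+}^{1−s}[u]‖_{L^1(a,b)} + ‖g‖_{L^1(a,b)} (g is the weak derivative of I_{a+}^{1−s}[u] and is uniquely determined a.e.). Then W^{s,1}(a,b) is complete: every sequence (u_n) in W^{s,1}(a,b) that is Cauchy with respect to ‖·‖_{W^{s,1}} converges in this norm to some u ∈ W^{s,1}(a,b). -/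
open MeasureTheory Set Filter ENNReal

/-- The `W^{s,1}`-norm of `u`, where `g` is the weak derivative of `I_{a+}^{1-s}[u]`. -/
noncomputable def WsNorm (a b s : ℝ) (u g : ℝ → ℝ) : ℝ :=
  (∫ x in Set.Ioo a b, |u x|) + (∫ x in Set.Ioo a b, |RLint a (1 - s) u x|) +
    ∫ x in Set.Ioo a b, |g x|

namespace RLaux

variable {a b σ : ℝ}

lemma Iio_inter_Ioo {x : ℝ} (hx : x ≤ b) : Iio x ∩ Ioo a b = Ioo a x := by
  ext t
  simp only [mem_inter_iff, mem_Iio, mem_Ioo]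
  exact ⟨fun h => ⟨h.2.1, h.1⟩, fun h => ⟨h.2, h.1, lt_of_lt_of_le h.2 hx⟩⟩

lemma Ioi_inter_Ioo {t : ℝ} (ht : a ≤ t) : Ioi t ∩ Ioo a b = Ioo t b := by
  ext x
  simp only [mem_inter_iff, mem_Ioi, mem_Ioo]
  exact ⟨fun h => ⟨h.1, h.2.2⟩, fun h => ⟨h.1, lt_of_le_of_lt ht h.1, h.2⟩⟩

lemma kernel_integrableOn (hσ : 0 < σ) {t c : ℝ} (htc : t ≤ c) :
    IntegrableOn (fun x : ℝ => (x - t) ^ (σ - 1)) (Ioo t c) := by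
  have h := (intervalIntegral.intervalIntegrable_rpow' (a := 0) (b := c - t)
    (by linarith : (-1:ℝ) < σ - 1)).comp_sub_right t
  simp only [zero_add, sub_add_cancel] at h
  exact (intervalIntegrable_iff_integrableOn_Ioo_of_le htc).1 h

lemma kernel_lint (hσ : 0 < σ) {t c : ℝ} (htc : t ≤ c) :
    ∫⁻ x in Ioo t c, ENNReal.ofReal ((x - t) ^ (σ - 1)) = ENNReal.ofReal (σ⁻¹ * (c - t) ^ σ) := by
  have hnn : 0 ≤ᵐ[volume.restrict (Ioo t c)] fun x => (x - t) ^ (σ - 1) :=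
    (ae_restrict_iff' measurableSet_Ioo).2 (ae_of_all _ fun x hx =>
      Real.rpow_nonneg (by linarith [hx.1]) _)
  rw [← ofReal_integral_eq_lintegral_ofReal (kernel_integrableOn hσ htc) hnn]
  congr 1
  rw [← integral_Ioc_eq_integral_Ioo, ← intervalIntegral.integral_of_le htc,
    intervalIntegral.integral_comp_sub_right (fun y => y ^ (σ - 1)) t, sub_self,
    integral_rpow (Or.inl (by linarith : (-1:ℝ) < σ - 1)), sub_add_cancel,
    Real.zero_rpow hσ.ne']
  ring

/-- The key Tonelli estimate for the Riemann–Liouville kernel, together with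
a.e.-measurability of the inner integral. -/
lemma core (hab : a < b) (hσ : 0 < σ) {w : ℝ → ℝ} (hw : IntegrableOn w (Ioo a b)) :
    AEMeasurable (fun x => ∫⁻ t in Ioo a x,
        (‖w t‖₊ : ℝ≥0∞) * ENNReal.ofReal ((x - t) ^ (σ - 1)) ∂volume)
      (volume.restrict (Ioo a b)) ∧
    (∫⁻ x in Ioo a b, ∫⁻ t in Ioo a x,
        (‖w t‖₊ : ℝ≥0∞) * ENNReal.ofReal ((x - t) ^ (σ - 1)) ∂volume ∂volume)
      ≤ ENNReal.ofReal (σ⁻¹ * (b - a) ^ σ) * ∫⁻ t in Ioo a b, (‖w t‖₊ : ℝ≥0∞) ∂volume := by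
  set μ := volume.restrict (Ioo a b) with hμ
  set G : ℝ × ℝ → ℝ≥0∞ := {p : ℝ × ℝ | p.2 < p.1}.indicator
      (fun p => (‖w p.2‖₊ : ℝ≥0∞) * ENNReal.ofReal ((p.1 - p.2) ^ (σ - 1))) with hG
  have hSm : MeasurableSet {p : ℝ × ℝ | p.2 < p.1} :=
    measurableSet_lt measurable_snd measurable_fst
  have hGm : AEMeasurable G (μ.prod μ) :=
    (((hw.aestronglyMeasurable.comp_snd (μ := μ)).enorm).mul
      (((measurable_fst.sub measurable_snd).pow_const _).ennreal_ofReal.aemeasurable)).indicator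
      hSm
  have key1 : ∀ᵐ x ∂μ, (∫⁻ t in Ioo a x,
      (‖w t‖₊ : ℝ≥0∞) * ENNReal.ofReal ((x - t) ^ (σ - 1)) ∂volume) = ∫⁻ t, G (x, t) ∂μ := by
    filter_upwards [ae_restrict_mem measurableSet_Ioo] with x hx
    have hfun : ∀ t, G (x, t) =
        (Iio x).indicator (fun t => (‖w t‖₊ : ℝ≥0∞) * ENNReal.ofReal ((x - t) ^ (σ - 1))) t :=
      fun t => by simp only [hG, Set.indicator_apply, mem_setOf_eq, mem_Iio]
    simp_rw [hfun]
    rw [lintegral_indicator measurableSet_Iio, hμ,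
      Measure.restrict_restrict measurableSet_Iio, Iio_inter_Ioo hx.2.le]
  have key2 : ∀ᵐ t ∂μ, (∫⁻ x, G (x, t) ∂μ)
      ≤ ENNReal.ofReal (σ⁻¹ * (b - a) ^ σ) * (‖w t‖₊ : ℝ≥0∞) := by
    filter_upwards [ae_restrict_mem measurableSet_Ioo] with t ht
    have hfun : ∀ x, G (x, t) =
        (Ioi t).indicator (fun x => (‖w t‖₊ : ℝ≥0∞) * ENNReal.ofReal ((x - t) ^ (σ - 1))) x :=
      fun x => by simp only [hG, Set.indicator_apply, mem_setOf_eq, mem_Ioi]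
    calc ∫⁻ x, G (x, t) ∂μ
        = ∫⁻ x in Ioo t b, (‖w t‖₊ : ℝ≥0∞) * ENNReal.ofReal ((x - t) ^ (σ - 1)) ∂volume := by
          simp_rw [hfun]
          rw [lintegral_indicator measurableSet_Ioi, hμ,
            Measure.restrict_restrict measurableSet_Ioi, Ioi_inter_Ioo ht.1.le]
      _ = (‖w t‖₊ : ℝ≥0∞) * ENNReal.ofReal (σ⁻¹ * (b - t) ^ σ) := by
          rw [lintegral_const_mul' _ _ coe_ne_top, kernel_lint hσ ht.2.le]
      _ ≤ (‖w t‖₊ : ℝ≥0∞) * ENNReal.ofReal (σ⁻¹ * (b - a) ^ σ) := by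
          refine mul_le_mul_right (ENNReal.ofReal_le_ofReal ?_) _
          exact mul_le_mul_of_nonneg_left
            (Real.rpow_le_rpow (by linarith [ht.2]) (by linarith [ht.1]) hσ.le)
            (inv_nonneg.2 hσ.le)
      _ = ENNReal.ofReal (σ⁻¹ * (b - a) ^ σ) * (‖w t‖₊ : ℝ≥0∞) := mul_comm _ _
  constructor
  · obtain ⟨G', hG'm, hGG'⟩ := hGm
    have hae : ∀ᵐ x ∂μ, ∀ᵐ t ∂μ, G (x, t) = G' (x, t) := Measure.ae_ae_of_ae_prod hGG'
    refine (Measurable.lintegral_prod_right' (ν := μ) hG'm).aemeasurable.congr ?_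
    filter_upwards [key1, hae] with x h1 h2
    rw [h1]
    exact (lintegral_congr_ae h2).symm
  · calc (∫⁻ x in Ioo a b, ∫⁻ t in Ioo a x,
          (‖w t‖₊ : ℝ≥0∞) * ENNReal.ofReal ((x - t) ^ (σ - 1)) ∂volume ∂volume)
        = ∫⁻ x, ∫⁻ t, G (x, t) ∂μ ∂μ := lintegral_congr_ae key1
      _ = ∫⁻ t, ∫⁻ x, G (x, t) ∂μ ∂μ := lintegral_lintegral_swap hGm
      _ ≤ ∫⁻ t, ENNReal.ofReal (σ⁻¹ * (b - a) ^ σ) * (‖w t‖₊ : ℝ≥0∞) ∂μ :=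
          lintegral_mono_ae key2
      _ = ENNReal.ofReal (σ⁻¹ * (b - a) ^ σ) * ∫⁻ t, (‖w t‖₊ : ℝ≥0∞) ∂μ :=
          lintegral_const_mul' _ _ ofReal_ne_top

lemma kernel_ae_intervalIntegrable (hab : a < b) (hσ : 0 < σ) {w : ℝ → ℝ}
    (hw : IntegrableOn w (Ioo a b)) :
    ∀ᵐ x ∂(volume.restrict (Ioo a b)),
      IntervalIntegrable (fun t => w t * (x - t) ^ (σ - 1)) volume a x := by
  obtain ⟨hm, hb⟩ := core hab hσ hw
  have hfin : ∀ᵐ x ∂(volume.restrict (Ioo a b)), (∫⁻ t in Ioo a x,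
      (‖w t‖₊ : ℝ≥0∞) * ENNReal.ofReal ((x - t) ^ (σ - 1)) ∂volume) < ∞ := by
    refine ae_lt_top' hm (ne_of_lt (lt_of_le_of_lt hb ?_))
    exact ENNReal.mul_lt_top ofReal_lt_top hw.2
  filter_upwards [hfin, ae_restrict_mem measurableSet_Ioo] with x hx hmem
  rw [intervalIntegrable_iff_integrableOn_Ioo_of_le hmem.1.le]
  constructor
  · exact ((hw.mono_set (Ioo_subset_Ioo le_rfl hmem.2.le)).aestronglyMeasurable).mul
      ((measurable_const.sub measurable_id).pow_const _).aestronglyMeasurable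
  · refine lt_of_le_of_lt (le_of_eq ?_) hx
    refine lintegral_congr_ae ((ae_restrict_iff' measurableSet_Ioo).2 (ae_of_all _ fun t ht => ?_))
    beta_reduce
    rw [enorm_mul,
      Real.enorm_eq_ofReal (Real.rpow_nonneg (by linarith [ht.2] : (0:ℝ) ≤ x - t) (σ - 1)), enorm_eq_nnnorm]

lemma RLint_aesm (hab : a < b) (hσ : 0 < σ) {w : ℝ → ℝ} (hw : IntegrableOn w (Ioo a b)) :
    AEStronglyMeasurable (RLint a σ w) (volume.restrict (Ioo a b)) := by
  set μ := volume.restrict (Ioo a b) with hμ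
  have hSm : MeasurableSet {p : ℝ × ℝ | p.2 < p.1} :=
    measurableSet_lt measurable_snd measurable_fst
  have hf : AEStronglyMeasurable
      ({q : ℝ × ℝ | q.2 < q.1}.indicator (fun q => w q.2 * (q.1 - q.2) ^ (σ - 1)))
      (μ.prod μ) :=
    (hw.aestronglyMeasurable.comp_snd.mul
      ((measurable_fst.sub measurable_snd).pow_const _).aestronglyMeasurable).indicator hSm
  refine ((hf.integral_prod_right').const_mul (Real.Gamma σ)⁻¹).congr ?_
  filter_upwards [ae_restrict_mem measurableSet_Ioo] with x hx
  show (Real.Gamma σ)⁻¹ * (∫ t, _ ∂μ) = RLint a σ w x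
  unfold RLint
  congr 1
  have hfun : ∀ t, ({q : ℝ × ℝ | q.2 < q.1}.indicator
      (fun q => w q.2 * (q.1 - q.2) ^ (σ - 1)) (x, t)) =
      (Iio x).indicator (fun t => w t * (x - t) ^ (σ - 1)) t :=
    fun t => by simp only [Set.indicator_apply, mem_setOf_eq, mem_Iio]
  simp_rw [hfun]
  rw [integral_indicator measurableSet_Iio, hμ,
    Measure.restrict_restrict measurableSet_Iio, Iio_inter_Ioo hx.2.le,
    ← integral_Ioc_eq_integral_Ioo, ← intervalIntegral.integral_of_le hx.1.le]

lemma RLint_enorm_le (hσ : 0 < σ) {w : ℝ → ℝ} :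
    ∀ᵐ x ∂(volume.restrict (Ioo a b)), (‖RLint a σ w x‖₊ : ℝ≥0∞)
      ≤ ENNReal.ofReal (Real.Gamma σ)⁻¹ *
        ∫⁻ t in Ioo a x, (‖w t‖₊ : ℝ≥0∞) * ENNReal.ofReal ((x - t) ^ (σ - 1)) ∂volume := by
  have hΓ : (0:ℝ) ≤ (Real.Gamma σ)⁻¹ := inv_nonneg.2 (Real.Gamma_pos_of_pos hσ).le
  filter_upwards [ae_restrict_mem measurableSet_Ioo] with x hx
  unfold RLint
  rw [nnnorm_mul, ENNReal.coe_mul]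
  refine mul_le_mul' (le_of_eq (Real.enorm_eq_ofReal hΓ)) ?_
  rw [intervalIntegral.integral_of_le hx.1.le, integral_Ioc_eq_integral_Ioo]
  refine le_trans (enorm_integral_le_lintegral_enorm _) ?_
  refine lintegral_mono_ae ((ae_restrict_iff' measurableSet_Ioo).2 (ae_of_all _ fun t ht => ?_))
  rw [enorm_mul,
    Real.enorm_eq_ofReal (Real.rpow_nonneg (by linarith [ht.2]) _)]; rfl

lemma RLint_lintegral_le (hab : a < b) (hσ : 0 < σ) {w : ℝ → ℝ}
    (hw : IntegrableOn w (Ioo a b)) :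
    ∫⁻ x in Ioo a b, (‖RLint a σ w x‖₊ : ℝ≥0∞) ∂volume
      ≤ ENNReal.ofReal ((Real.Gamma σ)⁻¹ * (σ⁻¹ * (b - a) ^ σ)) *
        ∫⁻ t in Ioo a b, (‖w t‖₊ : ℝ≥0∞) ∂volume := by
  have hΓ : (0:ℝ) ≤ (Real.Gamma σ)⁻¹ := inv_nonneg.2 (Real.Gamma_pos_of_pos hσ).le
  calc ∫⁻ x in Ioo a b, (‖RLint a σ w x‖₊ : ℝ≥0∞) ∂volume
      ≤ ∫⁻ x in Ioo a b, ENNReal.ofReal (Real.Gamma σ)⁻¹ *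
          ∫⁻ t in Ioo a x, (‖w t‖₊ : ℝ≥0∞) * ENNReal.ofReal ((x - t) ^ (σ - 1)) ∂volume ∂volume :=
        lintegral_mono_ae (RLint_enorm_le hσ)
    _ = ENNReal.ofReal (Real.Gamma σ)⁻¹ * ∫⁻ x in Ioo a b,
          ∫⁻ t in Ioo a x, (‖w t‖₊ : ℝ≥0∞) * ENNReal.ofReal ((x - t) ^ (σ - 1)) ∂volume ∂volume :=
        lintegral_const_mul' _ _ ofReal_ne_top
    _ ≤ ENNReal.ofReal (Real.Gamma σ)⁻¹ * (ENNReal.ofReal (σ⁻¹ * (b - a) ^ σ) *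
          ∫⁻ t in Ioo a b, (‖w t‖₊ : ℝ≥0∞) ∂volume) :=
        mul_le_mul_right (core hab hσ hw).2 _
    _ = ENNReal.ofReal ((Real.Gamma σ)⁻¹ * (σ⁻¹ * (b - a) ^ σ)) *
          ∫⁻ t in Ioo a b, (‖w t‖₊ : ℝ≥0∞) ∂volume := by
        rw [ENNReal.ofReal_mul hΓ, mul_assoc]

lemma RLint_integrableOn (hab : a < b) (hσ : 0 < σ) {w : ℝ → ℝ}
    (hw : IntegrableOn w (Ioo a b)) :
    IntegrableOn (RLint a σ w) (Ioo a b) := by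
  refine ⟨RLint_aesm hab hσ hw, lt_of_le_of_lt (RLint_lintegral_le hab hσ hw) ?_⟩
  exact ENNReal.mul_lt_top ofReal_lt_top hw.2

lemma RLint_integral_le (hab : a < b) (hσ : 0 < σ) {w : ℝ → ℝ}
    (hw : IntegrableOn w (Ioo a b)) :
    ∫ x in Ioo a b, |RLint a σ w x|
      ≤ (Real.Gamma σ)⁻¹ * (σ⁻¹ * (b - a) ^ σ) * ∫ x in Ioo a b, |w x| := by
  have hK : (0:ℝ) ≤ (Real.Gamma σ)⁻¹ * (σ⁻¹ * (b - a) ^ σ) := by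
    have := Real.Gamma_pos_of_pos hσ
    have h2 : (0:ℝ) ≤ (b - a) ^ σ := Real.rpow_nonneg (by linarith) _
    positivity
  have h1 : ∫ x in Ioo a b, |RLint a σ w x|
      = (∫⁻ x in Ioo a b, (‖RLint a σ w x‖₊ : ℝ≥0∞) ∂volume).toReal := by
    simp only [← enorm_eq_nnnorm]
    rw [← integral_norm_eq_lintegral_enorm (RLint_aesm hab hσ hw)]
    simp_rw [Real.norm_eq_abs]
  have h2 : ∫ x in Ioo a b, |w x|
      = (∫⁻ x in Ioo a b, (‖w x‖₊ : ℝ≥0∞) ∂volume).toReal := by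
    simp only [← enorm_eq_nnnorm]
    rw [← integral_norm_eq_lintegral_enorm hw.aestronglyMeasurable]
    simp_rw [Real.norm_eq_abs]
  rw [h1, h2]
  calc (∫⁻ x in Ioo a b, (‖RLint a σ w x‖₊ : ℝ≥0∞) ∂volume).toReal
      ≤ (ENNReal.ofReal ((Real.Gamma σ)⁻¹ * (σ⁻¹ * (b - a) ^ σ)) *
          ∫⁻ t in Ioo a b, (‖w t‖₊ : ℝ≥0∞) ∂volume).toReal :=
        ENNReal.toReal_mono (ENNReal.mul_ne_top ofReal_ne_top hw.2.ne)
          (RLint_lintegral_le hab hσ hw)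
    _ = (Real.Gamma σ)⁻¹ * (σ⁻¹ * (b - a) ^ σ) *
          (∫⁻ x in Ioo a b, (‖w x‖₊ : ℝ≥0∞) ∂volume).toReal := by
        rw [ENNReal.toReal_mul, ENNReal.toReal_ofReal hK]

lemma RLint_sub_ae (hab : a < b) (hσ : 0 < σ) {w₁ w₂ : ℝ → ℝ}
    (h1 : IntegrableOn w₁ (Ioo a b)) (h2 : IntegrableOn w₂ (Ioo a b)) :
    ∀ᵐ x ∂(volume.restrict (Ioo a b)),
      RLint a σ (fun y => w₁ y - w₂ y) x = RLint a σ w₁ x - RLint a σ w₂ x := by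
  filter_upwards [kernel_ae_intervalIntegrable hab hσ h1,
    kernel_ae_intervalIntegrable hab hσ h2] with x hx1 hx2
  unfold RLint
  simp_rw [sub_mul]
  rw [intervalIntegral.integral_sub hx1 hx2]
  ring

lemma primitive_integrableOn (hab : a < b) {q : ℝ → ℝ} (hq : IntegrableOn q (Ioo a b)) :
    IntegrableOn (fun x => ∫ t in a..x, q t) (Ioo a b) := by
  have hIcc : IntegrableOn q (Icc a b) := (integrableOn_Icc_iff_integrableOn_Ioo (f := q)).2 hq
  have hcont : ContinuousOn (fun x => ∫ t in Ioc a x, q t) (Icc a b) :=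
    intervalIntegral.continuousOn_primitive hIcc
  have hInt : IntegrableOn (fun x => ∫ t in Ioc a x, q t) (Icc a b) :=
    hcont.integrableOn_Icc
  exact (hInt.mono_set Ioo_subset_Icc_self).congr
    ((ae_restrict_iff' measurableSet_Ioo).2 (ae_of_all _ fun x hx =>
      (intervalIntegral.integral_of_le hx.1.le).symm))

lemma primitive_abs_le (hab : a < b) {q : ℝ → ℝ} (hq : IntegrableOn q (Ioo a b))
    {x : ℝ} (hx : x ∈ Ioo a b) :
    |∫ t in a..x, q t| ≤ ∫ t in Ioo a b, |q t| := by
  rw [intervalIntegral.integral_of_le hx.1.le]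
  have h1 : |∫ t in Ioc a x, q t| ≤ ∫ t in Ioc a x, |q t| := by
    simpa [Real.norm_eq_abs] using norm_integral_le_integral_norm (μ := volume.restrict (Ioc a x)) q
  refine le_trans h1 (setIntegral_mono_set hq.abs ?_ ?_)
  · exact (ae_restrict_iff' measurableSet_Ioo).2 (ae_of_all _ fun t _ => abs_nonneg _)
  · exact HasSubset.Subset.eventuallyLE fun t ht => ⟨ht.1, lt_of_le_of_lt ht.2 hx.2⟩

lemma integral_abs_sub_eq {μ : Measure ℝ} {f g : ℝ → ℝ}
    (hf : Integrable f μ) (hg : Integrable g μ) :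
    ∫ x, |f x - g x| ∂μ = ‖hf.toL1 f - hg.toL1 g‖ := by
  rw [← Integrable.toL1_sub, L1.norm_of_fun_eq_integral_norm]
  simp only [Pi.sub_apply, Real.norm_eq_abs]

end RLaux

open RLaux

/-- the Riemann–Liouville fractional Sobolev space `W^{s,1}(a,b)` is
complete: every Cauchy sequence converges in the `W^{s,1}`-norm. -/
theorem rl_sobolev_complete (a b s : ℝ) (hab : a < b) (hs : s ∈ Set.Ioo (0:ℝ) 1)
    (u : ℕ → ℝ → ℝ) (c : ℕ → ℝ) (g : ℕ → ℝ → ℝ)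
    (hu : ∀ n, IntegrableOn (u n) (Set.Ioo a b))
    (hg : ∀ n, IntegrableOn (g n) (Set.Ioo a b))
    (hrep : ∀ n, ∀ᵐ x ∂(volume.restrict (Set.Ioo a b)),
      RLint a (1 - s) (u n) x = c n + ∫ t in a..x, g n t)
    (hcauchy : ∀ ε > (0:ℝ), ∃ N : ℕ, ∀ m ≥ N, ∀ n ≥ N,
      WsNorm a b s (fun x => u m x - u n x) (fun x => g m x - g n x) < ε) :
    ∃ (v : ℝ → ℝ) (d : ℝ) (h : ℝ → ℝ),
      IntegrableOn v (Set.Ioo a b) ∧ IntegrableOn h (Set.Ioo a b) ∧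
      (∀ᵐ x ∂(volume.restrict (Set.Ioo a b)),
        RLint a (1 - s) v x = d + ∫ t in a..x, h t) ∧
      Filter.Tendsto
        (fun n => WsNorm a b s (fun x => u n x - v x) (fun x => g n x - h x))
        Filter.atTop (nhds 0) := by
  have hσ : 0 < 1 - s := by linarith [hs.2]
  have hba : (0:ℝ) < b - a := by linarith
  set σ : ℝ := 1 - s with hσdef
  set K : ℝ := (Real.Gamma σ)⁻¹ * (σ⁻¹ * (b - a) ^ σ) with hKdef
  -- components of the norm are each dominated by the norm
  have hnn : ∀ (p q : ℝ → ℝ), 0 ≤ ∫ x in Set.Ioo a b, |p x| :=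
    fun p q => integral_nonneg fun x => abs_nonneg _
  have hws : ∀ (p q : ℝ → ℝ), WsNorm a b s p q =
      (∫ x in Set.Ioo a b, |p x|) + (∫ x in Set.Ioo a b, |RLint a σ p x|) +
      ∫ x in Set.Ioo a b, |q x| := fun p q => rfl
  have hcomp1 : ∀ (p q : ℝ → ℝ), ∫ x in Set.Ioo a b, |p x| ≤ WsNorm a b s p q := by
    intro p q
    rw [hws]
    have := hnn (RLint a σ p) q
    have := hnn q q
    linarith [integral_nonneg (f := fun x => |RLint a σ p x|) (fun x => abs_nonneg (RLint a σ p x)) (μ := volume.restrict (Set.Ioo a b)),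
      integral_nonneg (f := fun x => |q x|) (fun x => abs_nonneg (q x)) (μ := volume.restrict (Set.Ioo a b))]
  have hcomp2 : ∀ (p q : ℝ → ℝ), ∫ x in Set.Ioo a b, |RLint a σ p x| ≤ WsNorm a b s p q := by
    intro p q
    rw [hws]
    linarith [integral_nonneg (f := fun x => |p x|) (fun x => abs_nonneg (p x)) (μ := volume.restrict (Set.Ioo a b)),
      integral_nonneg (f := fun x => |q x|) (fun x => abs_nonneg (q x)) (μ := volume.restrict (Set.Ioo a b))]
  have hcomp3 : ∀ (p q : ℝ → ℝ), ∫ x in Set.Ioo a b, |q x| ≤ WsNorm a b s p q := by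
    intro p q
    rw [hws]
    linarith [integral_nonneg (f := fun x => |p x|) (fun x => abs_nonneg (p x)) (μ := volume.restrict (Set.Ioo a b)),
      integral_nonneg (f := fun x => |RLint a σ p x|) (fun x => abs_nonneg (RLint a σ p x)) (μ := volume.restrict (Set.Ioo a b))]
  -- limit of u in L¹
  have hUc : CauchySeq (fun n => (hu n).toL1 (u n)) := by
    refine Metric.cauchySeq_iff.2 fun ε hε => ?_
    obtain ⟨N, hN⟩ := hcauchy ε hε
    refine ⟨N, fun m hm n hn => ?_⟩
    rw [dist_eq_norm, ← integral_abs_sub_eq (hu m) (hu n)]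
    exact lt_of_le_of_lt (hcomp1 _ (fun x => g m x - g n x)) (hN m hm n hn)
  obtain ⟨V, hV⟩ := cauchySeq_tendsto_of_complete hUc
  have hv : Integrable (V : ℝ → ℝ) (volume.restrict (Set.Ioo a b)) := L1.integrable_coeFn V
  have hL1u : Filter.Tendsto (fun n => ∫ x in Set.Ioo a b, |u n x - V x|)
      Filter.atTop (nhds 0) := by
    refine (tendsto_iff_norm_sub_tendsto_zero.1 hV).congr fun n => ?_
    rw [integral_abs_sub_eq (hu n) hv, Integrable.toL1_coeFn V hv]
  -- limit of g in L¹
  have hGc : CauchySeq (fun n => (hg n).toL1 (g n)) := by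
    refine Metric.cauchySeq_iff.2 fun ε hε => ?_
    obtain ⟨N, hN⟩ := hcauchy ε hε
    refine ⟨N, fun m hm n hn => ?_⟩
    rw [dist_eq_norm, ← integral_abs_sub_eq (hg m) (hg n)]
    exact lt_of_le_of_lt (hcomp3 (fun x => u m x - u n x) _) (hN m hm n hn)
  obtain ⟨H, hH⟩ := cauchySeq_tendsto_of_complete hGc
  have hh : Integrable (H : ℝ → ℝ) (volume.restrict (Set.Ioo a b)) := L1.integrable_coeFn H
  have hL1g : Filter.Tendsto (fun n => ∫ x in Set.Ioo a b, |g n x - H x|)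
      Filter.atTop (nhds 0) := by
    refine (tendsto_iff_norm_sub_tendsto_zero.1 hH).congr fun n => ?_
    rw [integral_abs_sub_eq (hg n) hh, Integrable.toL1_coeFn H hh]
  -- interval integrability of g-type functions up to x
  have hII : ∀ (q : ℝ → ℝ), IntegrableOn q (Set.Ioo a b) → ∀ x ∈ Set.Ioo a b,
      IntervalIntegrable q volume a x := fun q hq x hx =>
    (intervalIntegrable_iff_integrableOn_Ioo_of_le hx.1.le).2
      (hq.mono_set (Set.Ioo_subset_Ioo le_rfl hx.2.le))
  -- the constants c n form a Cauchy sequence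
  have hconst : ∀ (C : ℝ), ∫ x in Set.Ioo a b, C ∂volume = (b - a) * C := by
    intro C
    rw [setIntegral_const, Real.volume_real_Ioo, max_eq_left hba.le, smul_eq_mul]
  have hcineq : ∀ m n : ℕ, (b - a) * |c m - c n| ≤
      (∫ x in Set.Ioo a b, |RLint a σ (fun y => u m y - u n y) x|) +
      (b - a) * ∫ t in Set.Ioo a b, |g m t - g n t| := by
    intro m n
    have hgmn : IntegrableOn (fun t => g m t - g n t) (Set.Ioo a b) := (hg m).sub (hg n)
    have humn : IntegrableOn (fun y => u m y - u n y) (Set.Ioo a b) := (hu m).sub (hu n)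
    have hae : ∀ᵐ x ∂(volume.restrict (Set.Ioo a b)), |c m - c n| ≤
        |RLint a σ (fun y => u m y - u n y) x| + ∫ t in Set.Ioo a b, |g m t - g n t| := by
      filter_upwards [hrep m, hrep n, RLint_sub_ae hab hσ (hu m) (hu n),
        ae_restrict_mem measurableSet_Ioo] with x h1 h2 h3 hx
      have hgsub : ∫ t in a..x, (g m t - g n t) =
          (∫ t in a..x, g m t) - ∫ t in a..x, g n t :=
        intervalIntegral.integral_sub (hII (g m) (hg m) x hx) (hII (g n) (hg n) x hx)
      have heq : c m - c n = RLint a σ (fun y => u m y - u n y) x -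
          ∫ t in a..x, (g m t - g n t) := by
        rw [h3, h1, h2, hgsub]; ring
      calc |c m - c n| = |RLint a σ (fun y => u m y - u n y) x -
            ∫ t in a..x, (g m t - g n t)| := by rw [heq]
        _ ≤ |RLint a σ (fun y => u m y - u n y) x| + |∫ t in a..x, (g m t - g n t)| := by
            rw [sub_eq_add_neg]
            exact le_trans (abs_add_le _ _) (by rw [abs_neg])
        _ ≤ |RLint a σ (fun y => u m y - u n y) x| +
              ∫ t in Set.Ioo a b, |g m t - g n t| := by
            exact add_le_add_right (primitive_abs_le hab hgmn hx) _
    have hCint : Integrable (fun _ : ℝ => |c m - c n|) (volume.restrict (Set.Ioo a b)) :=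
      integrableOn_const (by rw [Real.volume_Ioo]; exact ofReal_ne_top)
    have hRint : Integrable (fun x => |RLint a σ (fun y => u m y - u n y) x|) (volume.restrict (Set.Ioo a b)) :=
      (RLint_integrableOn hab hσ humn).abs
    have hC2int : Integrable (fun _ : ℝ => ∫ t in Set.Ioo a b, |g m t - g n t|) (volume.restrict (Set.Ioo a b)) :=
      integrableOn_const (by rw [Real.volume_Ioo]; exact ofReal_ne_top)
    have := integral_mono_ae hCint (hRint.add hC2int) hae
    rw [hconst] at this
    refine le_trans this (le_of_eq ?_)
    simp only [Pi.add_apply]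
    rw [integral_add hRint hC2int, hconst]
  have hccauchy : CauchySeq c := by
    refine Metric.cauchySeq_iff.2 fun ε hε => ?_
    set δ : ℝ := (b - a) * ε / (1 + (b - a)) with hδdef
    have hδpos : 0 < δ := by positivity
    obtain ⟨N, hN⟩ := hcauchy δ hδpos
    refine ⟨N, fun m hm n hn => ?_⟩
    rw [Real.dist_eq]
    have h2 : ∫ x in Set.Ioo a b, |RLint a σ (fun y => u m y - u n y) x| < δ :=
      lt_of_le_of_lt (hcomp2 _ (fun x => g m x - g n x)) (hN m hm n hn)
    have h3 : ∫ t in Set.Ioo a b, |g m t - g n t| < δ :=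
      lt_of_le_of_lt (hcomp3 (fun x => u m x - u n x) _) (hN m hm n hn)
    have hδval : δ * (1 + (b - a)) = (b - a) * ε := by
      rw [hδdef]; field_simp
    have hkey := hcineq m n
    have hfin : (b - a) * |c m - c n| < (b - a) * ε := by nlinarith
    exact lt_of_mul_lt_mul_left hfin hba.le
  obtain ⟨d, hd⟩ := cauchySeq_tendsto_of_complete hccauchy
  have hdist : Filter.Tendsto (fun n => |c n - d|) Filter.atTop (nhds 0) := by
    simpa [Real.dist_eq] using tendsto_iff_dist_tendsto_zero.1 hd
  -- the candidate limit
  refine ⟨(V : ℝ → ℝ), d, (H : ℝ → ℝ), hv, hh, ?_, ?_⟩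
  · -- representation of the limit
    set f : ℝ → ℝ := fun x => RLint a σ (V : ℝ → ℝ) x - (d + ∫ t in a..x, H t) with hfdef
    have hfint : Integrable f (volume.restrict (Set.Ioo a b)) := by
      refine (RLint_integrableOn hab hσ hv).sub ?_
      exact (integrableOn_const (by rw [Real.volume_Ioo]; exact ofReal_ne_top)).add
        (primitive_integrableOn hab hh)
    have hAn : ∀ n : ℕ, ∫ x in Set.Ioo a b, |f x| ≤
        K * (∫ x in Set.Ioo a b, |u n x - V x|) +
        ((b - a) * |c n - d| + (b - a) * ∫ t in Set.Ioo a b, |g n t - H t|) := by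
      intro n
      have hvu : IntegrableOn (fun y => (V : ℝ → ℝ) y - u n y) (Set.Ioo a b) := hv.sub (hu n)
      have hgh : IntegrableOn (fun t => g n t - (H : ℝ → ℝ) t) (Set.Ioo a b) :=
        (hg n).sub hh
      have hae : ∀ᵐ x ∂(volume.restrict (Set.Ioo a b)), |f x| ≤
          |RLint a σ (fun y => (V : ℝ → ℝ) y - u n y) x| +
          (|c n - d| + ∫ t in Set.Ioo a b, |g n t - H t|) := by
        filter_upwards [hrep n, RLint_sub_ae hab hσ hv (hu n),
          ae_restrict_mem measurableSet_Ioo] with x h1 h2 hx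
        have hHsub : ∫ t in a..x, (g n t - (H : ℝ → ℝ) t) =
            (∫ t in a..x, g n t) - ∫ t in a..x, (H : ℝ → ℝ) t :=
          intervalIntegral.integral_sub (hII (g n) (hg n) x hx) (hII _ hh x hx)
        have heq : f x = RLint a σ (fun y => (V : ℝ → ℝ) y - u n y) x +
            ((c n - d) + ∫ t in a..x, (g n t - (H : ℝ → ℝ) t)) := by
          rw [hfdef, h2, h1, hHsub]; ring
        calc |f x| ≤ |RLint a σ (fun y => (V : ℝ → ℝ) y - u n y) x| +
              |(c n - d) + ∫ t in a..x, (g n t - (H : ℝ → ℝ) t)| := by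
              rw [heq]; exact abs_add_le _ _
          _ ≤ |RLint a σ (fun y => (V : ℝ → ℝ) y - u n y) x| +
              (|c n - d| + |∫ t in a..x, (g n t - (H : ℝ → ℝ) t)|) :=
              add_le_add_right (abs_add_le _ _) _
          _ ≤ |RLint a σ (fun y => (V : ℝ → ℝ) y - u n y) x| +
              (|c n - d| + ∫ t in Set.Ioo a b, |g n t - H t|) :=
              add_le_add_right (add_le_add_right (primitive_abs_le hab hgh hx) _) _
      have hRint : Integrable
          (fun x => |RLint a σ (fun y => (V : ℝ → ℝ) y - u n y) x|) (volume.restrict (Set.Ioo a b)) :=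
        (RLint_integrableOn hab hσ hvu).abs
      have hC2int : Integrable
          (fun _ : ℝ => |c n - d| + ∫ t in Set.Ioo a b, |g n t - H t|) (volume.restrict (Set.Ioo a b)) :=
        integrableOn_const (by rw [Real.volume_Ioo]; exact ofReal_ne_top)
      have hmono := integral_mono_ae hfint.abs (hRint.add hC2int) hae
      have hsplit : ∫ x in Set.Ioo a b,
          (|RLint a σ (fun y => (V : ℝ → ℝ) y - u n y) x| +
           (|c n - d| + ∫ t in Set.Ioo a b, |g n t - H t|)) ∂volume =
          (∫ x in Set.Ioo a b, |RLint a σ (fun y => (V : ℝ → ℝ) y - u n y) x|) +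
          ((b - a) * (|c n - d| + ∫ t in Set.Ioo a b, |g n t - H t|)) := by
        rw [integral_add hRint hC2int, hconst]
      have hRle := RLint_integral_le hab hσ hvu
      have habs : ∫ x in Set.Ioo a b, |(V : ℝ → ℝ) x - u n x| =
          ∫ x in Set.Ioo a b, |u n x - V x| := by
        simp_rw [abs_sub_comm]
      simp only [Pi.add_apply] at hmono
      rw [hsplit] at hmono
      rw [habs] at hRle
      calc ∫ x in Set.Ioo a b, |f x| ≤ _ := hmono
        _ ≤ K * (∫ x in Set.Ioo a b, |u n x - V x|) +
            ((b - a) * |c n - d| + (b - a) * ∫ t in Set.Ioo a b, |g n t - H t|) := by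
            rw [← hKdef] at hRle
            nlinarith [hRle]
    have hA0 : Filter.Tendsto (fun n =>
        K * (∫ x in Set.Ioo a b, |u n x - V x|) +
        ((b - a) * |c n - d| + (b - a) * ∫ t in Set.Ioo a b, |g n t - H t|))
        Filter.atTop (nhds 0) := by
      have := (hL1u.const_mul K).add ((hdist.const_mul (b - a)).add (hL1g.const_mul (b - a)))
      simpa using this
    have hzero : ∫ x in Set.Ioo a b, |f x| = 0 :=
      le_antisymm (ge_of_tendsto' hA0 hAn) (integral_nonneg fun x => abs_nonneg _)
    have hfzero : (fun x => |f x|) =ᵐ[volume.restrict (Set.Ioo a b)] 0 :=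
      (integral_eq_zero_iff_of_nonneg (fun x => abs_nonneg (f x)) hfint.abs).1 hzero
    filter_upwards [hfzero] with x hx
    have : f x = 0 := abs_eq_zero.1 hx
    have := sub_eq_zero.1 this
    exact this
  · -- convergence in the norm
    have hT2 : Filter.Tendsto
        (fun n => ∫ x in Set.Ioo a b, |RLint a σ (fun x => u n x - V x) x|)
        Filter.atTop (nhds 0) := by
      refine squeeze_zero (fun n => integral_nonneg fun x => abs_nonneg _)
        (fun n => RLint_integral_le hab hσ ((hu n).sub hv)) ?_
      have := hL1u.const_mul ((Real.Gamma σ)⁻¹ * (σ⁻¹ * (b - a) ^ σ))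
      simpa using this
    have := (hL1u.add hT2).add hL1g
    simpa using (by exact this : Filter.Tendsto (fun n => WsNorm a b s (fun x => u n x - V x) (fun x => g n x - H x)) Filter.atTop (nhds (0 + 0 + 0)))
end
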